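/- arXiv:2010.08771 — 16 statements merged into one kernel-verified Lean document; each statement's English description precedes it below -/
import Mathlib

section
/- If a choice correspondence c admits a minimal compromise representation (with weak order R and linear order L), then c satisfies Sen's β axiom: for all menus A ⊆ B and alternatives x, y with x, y ∈ A, if x, y ∈ c(A) and y ∈ c(B), then x ∈ c(B). -/
open Set

variable {X : Type*}

/-- A complete and transitive binary relation (weak order). -/
def WeakOrd (R : X → X → Prop) : Prop :=
  (∀ x y, R x y ∨ R y x) ∧ (∀ ⦃x y z⦄, R x y → R y z → R x z)

/-- A linear order: an antisymmetric weak order. -/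
def LinOrdRel (L : X → X → Prop) : Prop :=
  WeakOrd L ∧ ∀ ⦃x y⦄, L x y → L y x → x = y

/-- max(A,R): the R-maximal elements of A. -/
def maxSet (R : X → X → Prop) (A : Set X) : Set X := {x ∈ A | ∀ y ∈ A, R x y}

/-- m is the L-minimum of S: every member of S is L-above m. -/
def IsMinOf (L : X → X → Prop) (S : Set X) (m : X) : Prop := m ∈ S ∧ ∀ y ∈ S, L y m

/-- A choice correspondence: nonempty-valued and c(A) ⊆ A on every menu. -/
def ChoiceCorr (c : Set X → Set X) : Prop :=
  ∀ ⦃A : Set X⦄, A.Nonempty → (c A).Nonempty ∧ c A ⊆ A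

/-- Minimal compromise representation by a weak order R and linear order L. -/
def MCRep (c : Set X → Set X) (R L : X → X → Prop) : Prop :=
  WeakOrd R ∧ LinOrdRel L ∧
  ∀ ⦃A : Set X⦄, A.Nonempty →
    ((∃ a, maxSet R A = {a}) → c A = maxSet R A) ∧
    (¬ (∃ a, maxSet R A = {a}) →
      ∃ m, IsMinOf L (maxSet R A) m ∧ c A = maxSet R A \ {m})

/-- r^c(A): elements whose removal changes choice (with r^c(A) = A on singletons). -/
def rC (c : Set X → Set X) (A : Set X) : Set X :=
  {x ∈ A | (∃ a, A = {a}) ∨ c (A \ {x}) ≠ c A}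

/-- MC representation implies Sen's β. -/
theorem mc_implies_beta [Finite X] (c : Set X → Set X) (hc : ChoiceCorr c)
    (hmc : ∃ R L : X → X → Prop, MCRep c R L) :
    ∀ ⦃A B : Set X⦄ ⦃x y : X⦄, A.Nonempty → A ⊆ B → x ∈ A → y ∈ A →
      x ∈ c A → y ∈ c A → y ∈ c B → x ∈ c B := by
  obtain ⟨R, L, hR, hL, hrep⟩ := hmc
  intro A B x y hA hAB hxA hyA hxcA hycA hycB
  have hB : B.Nonempty := ⟨x, hAB hxA⟩
  have key : ∀ ⦃S : Set X⦄, S.Nonempty → c S ⊆ maxSet R S := by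
    intro S hS z hz
    rcases hrep hS with ⟨h1, h2⟩
    by_cases hs : ∃ a, maxSet R S = {a}
    · rw [h1 hs] at hz; exact hz
    · obtain ⟨m, _, hcS⟩ := h2 hs; rw [hcS] at hz; exact hz.1
  have hxm : x ∈ maxSet R A := key hA hxcA
  have hym : y ∈ maxSet R A := key hA hycA
  have hyB : y ∈ maxSet R B := key hB hycB
  have hRxy : R x y := hxm.2 y hyA
  have hxB : x ∈ maxSet R B := ⟨hAB hxA, fun b hb => hR.2 hRxy (hyB.2 b hb)⟩
  rcases hrep hB with ⟨h1B, h2B⟩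
  by_cases hs : ∃ a, maxSet R B = {a}
  · rw [h1B hs]; exact hxB
  · obtain ⟨m, ⟨hmmem, hmin⟩, hcB⟩ := h2B hs
    rw [hcB]
    refine ⟨hxB, ?_⟩
    intro hxm'
    simp only [mem_singleton_iff] at hxm'
    subst hxm'
    rw [hcB] at hycB
    rcases hrep hA with ⟨h1A, h2A⟩
    by_cases hsA : ∃ a, maxSet R A = {a}
    · obtain ⟨a, ha⟩ := hsA
      have hxa : x = a := by rw [ha] at hxm; exact hxm
      have hya : y = a := by rw [ha] at hym; exact hym
      exact hycB.2 (by rw [hya, ← hxa]; exact rfl)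
    · obtain ⟨mA, ⟨hmA, hminA⟩, hcA⟩ := h2A hsA
      rw [hcA] at hxcA
      apply hxcA.2
      have hmAB : mA ∈ maxSet R B :=
        ⟨hAB hmA.1, fun b hb => hR.2 (hmA.2 x hxA) (hxB.2 b hb)⟩
      have h1 : L mA x := hmin mA hmAB
      have h2 : L x mA := hminA x hxm
      exact (hL.2 h2 h1)
end

section
/- There exists a choice correspondence admitting a minimal compromise representation which violates Sen's α axiom: there exist menus B ⊂ A and an alternative x with x ∈ c(A), x ∈ B, but x ∉ c(B). Concretely, on X = {x,y,z}, taking R with all three alternatives mutually indifferent and L the linear order xLyLz, the induced MC choice correspondence satisfies y ∈ c({x,y,z}) but y ∉ c({x,y}). -/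
open Set

variable {X : Type*}

/-- The example choice correspondence. -/
def cEx (A : Set (Fin 3)) : Set (Fin 3) :=
  {x ∈ A | (∃ a, A = {a}) ∨ ∃ y ∈ A, x < y}

lemma maxSet_true (A : Set (Fin 3)) : maxSet (fun _ _ => True) A = A := by
  ext x; simp [maxSet]

lemma exists_max (A : Set (Fin 3)) (hA : A.Nonempty) :
    ∃ m ∈ A, ∀ y ∈ A, y ≤ m := by
  classical
  have hfin : A.Finite := A.toFinite
  obtain ⟨m, hm, hmax⟩ := Set.Finite.exists_maximalFor id A hfin hA
  exact ⟨m, hm, fun y hy => by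
    rcases le_total y m with h | h
    · exact h
    · exact hmax hy h⟩

lemma cEx_not_singleton {A : Set (Fin 3)} (hA : A.Nonempty)
    (hns : ¬ ∃ a, A = {a}) {m : Fin 3} (hm : m ∈ A) (hmax : ∀ y ∈ A, y ≤ m) :
    cEx A = A \ {m} := by
  ext x
  simp only [cEx, Set.mem_setOf_eq, Set.mem_diff, Set.mem_singleton_iff]
  constructor
  · rintro ⟨hx, h | ⟨y, hy, hxy⟩⟩
    · exact absurd h hns
    · exact ⟨hx, fun hxm => absurd (lt_of_lt_of_le hxy (hmax y hy)) (by simp [hxm])⟩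
  · rintro ⟨hx, hxm⟩
    exact ⟨hx, Or.inr ⟨m, hm, lt_of_le_of_ne (hmax x hx) hxm⟩⟩

/-- an MC choice correspondence violating Sen's α, on X = Fin 3
(x = 0, y = 1, z = 2), with R total indifference and L given by xLyLz. -/
theorem mc_can_fail_alpha :
    ∃ c : Set (Fin 3) → Set (Fin 3), ChoiceCorr c ∧
      MCRep c (fun _ _ => True) (fun a b => a ≤ b) ∧
      ({0, 1} : Set (Fin 3)) ⊂ {0, 1, 2} ∧
      (1 : Fin 3) ∈ c {0, 1, 2} ∧ (1 : Fin 3) ∈ ({0, 1} : Set (Fin 3)) ∧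
      (1 : Fin 3) ∉ c {0, 1} := by
  refine ⟨cEx, ?_, ?_, ?_, ?_, ?_, ?_⟩
  · -- ChoiceCorr
    intro A hA
    constructor
    · by_cases hs : ∃ a, A = {a}
      · obtain ⟨a, rfl⟩ := hs
        exact ⟨a, by simp [cEx]⟩
      · obtain ⟨m, hm, hmax⟩ := exists_max A hA
        rw [cEx_not_singleton hA hs hm hmax]
        -- A \ {m} nonempty: A has another element
        have : ∃ x ∈ A, x ≠ m := by
          by_contra h
          push_neg at h
          exact hs ⟨m, Set.eq_singleton_iff_unique_mem.2 ⟨hm, fun x hx => h x hx⟩⟩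
        obtain ⟨x, hx, hxm⟩ := this
        exact ⟨x, hx, hxm⟩
    · intro x hx; exact hx.1
  · -- MCRep
    refine ⟨⟨fun _ _ => Or.inl trivial, fun _ _ _ _ _ => trivial⟩,
      ⟨⟨fun a b => le_total a b, fun _ _ _ h1 h2 => le_trans h1 h2⟩,
        fun _ _ h1 h2 => le_antisymm h1 h2⟩, ?_⟩
    intro A hA
    rw [maxSet_true]
    constructor
    · rintro ⟨a, rfl⟩
      ext x; simp [cEx]
    · intro hns
      obtain ⟨m, hm, hmax⟩ := exists_max A hA
      exact ⟨m, ⟨hm, hmax⟩, cEx_not_singleton hA hns hm hmax⟩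
  · constructor
    · intro x hx; simp at hx ⊢; tauto
    · intro h
      have : (2 : Fin 3) ∈ ({0, 1} : Set (Fin 3)) := h (by simp)
      simp at this
  · exact ⟨by simp, Or.inr ⟨2, by simp, by decide⟩⟩
  · simp
  · rintro ⟨-, h | ⟨y, hy, hxy⟩⟩
    · obtain ⟨a, ha⟩ := h
      have h0 : (0 : Fin 3) ∈ ({a} : Set (Fin 3)) := ha ▸ (by simp)
      have h1 : (1 : Fin 3) ∈ ({a} : Set (Fin 3)) := ha ▸ (by simp)
      simp at h0 h1; exact absurd (h0.trans h1.symm) (by decide)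
    · simp at hy
      rcases hy with rfl | rfl <;> exact absurd hxy (by decide)
end

section
/- If a choice correspondence c admits a minimal compromise representation, then c satisfies Sen's γ axiom: for all menus A, B and alternative x, if x ∈ c(A) and x ∈ c(B), then x ∈ c(A ∪ B). -/
open Set

variable {X : Type*}

/-- MC representation implies Sen's γ. -/
theorem mc_implies_gamma [Finite X] (c : Set X → Set X) (hc : ChoiceCorr c)
    (hmc : ∃ R L : X → X → Prop, MCRep c R L) :
    ∀ ⦃A B : Set X⦄ ⦃x : X⦄, A.Nonempty → B.Nonempty →
      x ∈ c A → x ∈ c B → x ∈ c (A ∪ B) := by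
  obtain ⟨R, L, hR, hL, hrep⟩ := hmc
  have hsub : ∀ ⦃A : Set X⦄, A.Nonempty → c A ⊆ maxSet R A := by
    intro A hA
    obtain ⟨h1, h2⟩ := hrep hA
    by_cases hsing : ∃ a, maxSet R A = {a}
    · rw [h1 hsing]
    · obtain ⟨m, _, hcA⟩ := h2 hsing
      rw [hcA]; exact Set.diff_subset
  intro A B x hA hB hxA hxB
  have hxMA : x ∈ maxSet R A := hsub hA hxA
  have hxMB : x ∈ maxSet R B := hsub hB hxB
  have hxM : x ∈ maxSet R (A ∪ B) := by
    refine ⟨Or.inl hxMA.1, ?_⟩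
    rintro y (hy | hy)
    · exact hxMA.2 y hy
    · exact hxMB.2 y hy
  have hABne : (A ∪ B).Nonempty := hA.mono Set.subset_union_left
  obtain ⟨h1, h2⟩ := hrep hABne
  by_cases hsing : ∃ a, maxSet R (A ∪ B) = {a}
  · rw [h1 hsing]; exact hxM
  · obtain ⟨m, hm, hcAB⟩ := h2 hsing
    rw [hcAB]
    refine ⟨hxM, ?_⟩
    simp only [Set.mem_singleton_iff]
    intro hxm
    subst hxm
    have hy : ∃ y ∈ maxSet R (A ∪ B), y ≠ x := by
      by_contra hcon
      push_neg at hcon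
      exact hsing ⟨x, Set.eq_singleton_iff_unique_mem.mpr ⟨hxM, hcon⟩⟩
    obtain ⟨y, hyM, hyx⟩ := hy
    have key : ∀ C : Set X, C.Nonempty → C ⊆ A ∪ B → x ∈ c C → y ∈ C → False := by
      intro C hC hCsub hxC hyC
      have hxMC : x ∈ maxSet R C := hsub hC hxC
      have hyMC : y ∈ maxSet R C := ⟨hyC, fun z hz => hyM.2 z (hCsub hz)⟩
      have hMCsub : maxSet R C ⊆ maxSet R (A ∪ B) :=
        fun w hw => ⟨hCsub hw.1, fun z hz => hR.2 (hw.2 x hxMC.1) (hxM.2 z hz)⟩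
      have hnsing : ¬ ∃ a, maxSet R C = {a} := by
        rintro ⟨a, ha⟩
        rw [ha] at hxMC hyMC
        exact hyx (hyMC.trans hxMC.symm)
      obtain ⟨mC, hmC, hcC⟩ := (hrep hC).2 hnsing
      rw [hcC] at hxC
      -- x ≠ mC, but mC ∈ maxSet R (A∪B) so L mC x (x is min), and L x mC (mC is min of maxSet C ∋ x)
      have h1 : L mC x := hm.2 mC (hMCsub hmC.1)
      have h2 : L x mC := hmC.2 x hxMC
      exact hxC.2 (hL.2 h2 h1)
    rcases hyM.1 with hyA | hyB
    · exact key A hA Set.subset_union_left hxA hyA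
    · exact key B hB Set.subset_union_right hxB hyB
end

section
/- If a choice correspondence c admits a minimal compromise representation, then c satisfies No Binary Cycles (NBC): for all x, y, z ∈ X, if x ∈ c({x,y}) and y ∈ c({y,z}), then x ∈ c({x,z}). -/
open Set

variable {X : Type*}

/-- MC representation implies No Binary Cycles. -/
theorem mc_implies_nbc [Finite X] (c : Set X → Set X) (hc : ChoiceCorr c)
    (hmc : ∃ R L : X → X → Prop, MCRep c R L) :
    ∀ x y z : X, x ∈ c {x, y} → y ∈ c {y, z} → x ∈ c {x, z} := by
  obtain ⟨R, L, hR, hL, hrep⟩ := hmc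
  have hRrefl : ∀ x, R x x := fun x => (hR.1 x x).elim id id
  have hLrefl : ∀ x, L x x := fun x => (hL.1.1 x x).elim id id
  set P : X → X → Prop :=
    fun a b => (R a b ∧ ¬ R b a) ∨ (R a b ∧ R b a ∧ L a b) with hP
  have key : ∀ a b : X, a ≠ b → (a ∈ c {a, b} ↔ P a b) := by
    intro a b hab
    have hne : ({a, b} : Set X).Nonempty := ⟨a, Or.inl rfl⟩
    obtain ⟨hsing, hnsing⟩ := hrep hne
    by_cases hab1 : R a b
    · by_cases hba : R b a
      · -- tie case
        have hmax : maxSet R {a, b} = {a, b} := by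
          ext s
          constructor
          · exact fun hs => hs.1
          · rintro (rfl | rfl)
            · exact ⟨Or.inl rfl, by rintro y (rfl | rfl) <;> [exact hRrefl _; exact hab1]⟩
            · exact ⟨Or.inr rfl, by rintro y (rfl | rfl) <;> [exact hba; exact hRrefl _]⟩
        have hnot : ¬ ∃ t, maxSet R {a, b} = {t} := by
          rintro ⟨t, ht⟩
          rw [hmax] at ht
          have h1 : a ∈ ({t} : Set X) := ht ▸ Or.inl rfl
          have h2 : b ∈ ({t} : Set X) := ht ▸ Or.inr rfl
          exact hab (h1.trans h2.symm)
        obtain ⟨m, hm, hcA⟩ := hnsing hnot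
        rw [hmax] at hm
        rcases hm.1 with rfl | rfl
        · -- m = a : a not chosen, and ¬ L a b
          have hLba : L b m := hm.2 b (Or.inr rfl)
          constructor
          · intro ha
            rw [hcA, hmax] at ha
            exact absurd rfl ha.2
          · rintro (⟨_, h⟩ | ⟨_, _, hLab⟩)
            · exact absurd hba h
            · exact absurd (hL.2 hLab hLba) hab
        · -- m = b : a chosen, L a b
          have hLab : L a m := hm.2 a (Or.inl rfl)
          constructor
          · intro _
            exact Or.inr ⟨hab1, hba, hLab⟩
          · intro _
            rw [hcA, hmax]
            exact ⟨Or.inl rfl, fun h => hab h⟩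
      · -- a strictly better
        have hmax : maxSet R {a, b} = {a} := by
          ext s
          constructor
          · rintro ⟨rfl | rfl, hs⟩
            · rfl
            · exact absurd (hs a (Or.inl rfl)) hba
          · rintro rfl
            exact ⟨Or.inl rfl, by rintro y (rfl | rfl) <;> [exact hRrefl _; exact hab1]⟩
        have hcA := hsing ⟨a, hmax⟩
        rw [hcA, hmax]
        exact ⟨fun _ => Or.inl ⟨hab1, hba⟩, fun _ => rfl⟩
    · -- b strictly better, a not chosen and ¬ P a b
      have hba : R b a := (hR.1 a b).resolve_left hab1
      have hmax : maxSet R {a, b} = {b} := by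
        ext s
        constructor
        · rintro ⟨rfl | rfl, hs⟩
          · exact absurd (hs b (Or.inr rfl)) hab1
          · rfl
        · rintro rfl
          exact ⟨Or.inr rfl, by rintro y (rfl | rfl) <;> [exact hba; exact hRrefl _]⟩
      have hcA := hsing ⟨b, hmax⟩
      rw [hcA, hmax]
      constructor
      · intro h; exact absurd h hab
      · rintro (⟨h, _⟩ | ⟨h, _, _⟩) <;> exact absurd h hab1
  have Ptrans : ∀ a b d : X, P a b → P b d → P a d := by
    rintro a b d hab hbd
    have hRab : R a b := hab.elim And.left And.left
    have hRbd : R b d := hbd.elim And.left And.left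
    have hRad : R a d := hR.2 hRab hRbd
    rcases hab with ⟨_, hnba⟩ | ⟨_, hRba, hLab⟩
    · left
      refine ⟨hRad, fun hda => hnba (hR.2 hRbd hda)⟩
    · rcases hbd with ⟨_, hndb⟩ | ⟨_, hRdb, hLbd⟩
      · left
        exact ⟨hRad, fun hda => hndb (hR.2 hda hRab)⟩
      · right
        exact ⟨hRad, hR.2 hRdb hRba, hL.1.2 hLab hLbd⟩
  intro x y z hxy hyz
  by_cases hxz : x = z
  · subst hxz
    have : ({x, x} : Set X) = {x} := Set.pair_eq_singleton x
    rw [this]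
    obtain ⟨⟨w, hw⟩, hsub⟩ := hc (Set.singleton_nonempty x)
    have : w = x := hsub hw
    rwa [this] at hw
  · by_cases hxy' : x = y
    · subst hxy'; exact hyz
    · by_cases hyz' : y = z
      · subst hyz'; exact hxy
      · exact (key x z hxz).mpr (Ptrans x y z ((key x y hxy').mp hxy) ((key y z hyz').mp hyz))
end

section
/- If a choice correspondence c is rational, i.e., there exists a weak order R with c(A) = max(A,R) for all menus A, then for every menu A, r^c(A) = c(A), where r^c(A) = {x ∈ A : c(A \ {x}) ≠ c(A)} (with the convention restricted to x such that A \ {x} is nonempty, or working with menus of size ≥ 2; removal of a chosen or unchosen element is compared). -/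
open Set

variable {X : Type*}

/-- if c is rational then r^c(A) = c(A) on every menu. -/
theorem rational_implies_rc_eq_c [Finite X] (c : Set X → Set X) (hc : ChoiceCorr c)
    (hrat : ∃ R : X → X → Prop, WeakOrd R ∧ ∀ ⦃A : Set X⦄, A.Nonempty → c A = maxSet R A) :
    ∀ ⦃A : Set X⦄, A.Nonempty → rC c A = c A := by
  obtain ⟨R, ⟨hcomp, htrans⟩, hrep⟩ := hrat
  intro A hA
  by_cases hsing : ∃ a, A = {a}
  · obtain ⟨a, rfl⟩ := hsing
    have h1 := hc hA
    have : c {a} = {a} := by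
      obtain ⟨⟨x, hx⟩, hsub⟩ := h1
      have hxa : x = a := hsub hx
      apply Set.eq_singleton_iff_nonempty_unique_mem.mpr
      exact ⟨⟨x, hx⟩, fun y hy => hsub hy⟩
    ext x
    simp [rC, this]
  · ext x
    simp only [rC, Set.mem_setOf_eq, hsing, false_or]
    constructor
    · rintro ⟨hxA, hne⟩
      rw [hrep hA]
      by_cases hxm : x ∈ maxSet R A
      · exact hxm
      exfalso
      apply hne
      have hAx : (A \ {x}).Nonempty := by
        have hm : (maxSet R A).Nonempty := by
          rw [← hrep hA]; exact (hc hA).1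
        obtain ⟨y, hy⟩ := hm
        refine ⟨y, hy.1, fun h => hxm ?_⟩
        rw [Set.mem_singleton_iff] at h
        rwa [h] at hy
      rw [hrep hAx, hrep hA]
      have hz : ∃ z ∈ A, ¬ R x z := by
        by_contra h
        push_neg at h
        exact hxm ⟨hxA, h⟩
      obtain ⟨z, hzA, hzR⟩ := hz
      have hRxx : R x x := (hcomp x x).elim id id
      have hzx : z ≠ x := fun h => hzR (by rw [h]; exact hRxx)
      have hxmax : ¬ x ∈ maxSet R A := hxm
      ext y
      constructor
      · rintro ⟨⟨hyA, hyx⟩, hymax⟩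
        refine ⟨hyA, fun w hw => ?_⟩
        by_cases hwx : w = x
        · subst hwx
          rcases hcomp y w with h | h
          · exact h
          · exact absurd (htrans h (hymax z ⟨hzA, hzx⟩)) hzR
        · exact hymax w ⟨hw, hwx⟩
      · rintro ⟨hyA, hymax⟩
        have hyx : y ≠ x := fun h => hxmax (h ▸ ⟨hyA, hymax⟩)
        exact ⟨⟨hyA, hyx⟩, fun w hw => hymax w hw.1⟩
    · intro hx
      have hxA : x ∈ A := ((hc hA).2) hx
      refine ⟨hxA, fun heq => ?_⟩
      have hAx : (A \ {x}).Nonempty := by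
        by_contra h
        rw [Set.not_nonempty_iff_eq_empty, Set.diff_eq_empty] at h
        exact hsing ⟨x, Set.Subset.antisymm h (Set.singleton_subset_iff.mpr hxA)⟩
      have : x ∈ c (A \ {x}) := heq ▸ hx
      exact ((hc hAx).2 this).2 rfl
end

section
/- If a choice correspondence c satisfies Condition 1 (x,y ∈ A ⊂ B, x ∈ c(A), y ∈ c(B) imply x ∈ c(B)) and Condition 3 (for every menu A with at least two elements there exists x ∈ A with x ∉ c(A)), then c satisfies No Binary Cycles: x ∈ c({x,y}) and y ∈ c({y,z}) imply x ∈ c({x,z}). -/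
open Set

variable {X : Type*}

/-- Condition 1. -/
def Cond1 (c : Set X → Set X) : Prop :=
  ∀ ⦃A B : Set X⦄ ⦃x y : X⦄, A.Nonempty → A ⊂ B → x ∈ A → y ∈ A →
    x ∈ c A → y ∈ c B → x ∈ c B

/-- Condition 2. -/
def Cond2 (c : Set X → Set X) : Prop :=
  ∀ ⦃A B : Set X⦄ ⦃x y : X⦄, A.Nonempty → A ⊂ B → x ∈ A → y ∈ A →
    x ∈ rC c A → y ∈ rC c B → x ∈ rC c B

/-- Condition 3. -/
def Cond3 (c : Set X → Set X) : Prop :=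
  ∀ ⦃A : Set X⦄, (∃ x y, x ∈ A ∧ y ∈ A ∧ x ≠ y) → ∃ x ∈ A, x ∉ c A

/-- Condition 4. -/
def Cond4 (c : Set X → Set X) : Prop :=
  ∀ ⦃A : Set X⦄ ⦃x y : X⦄, A.Nonempty → x ∈ A → x ∉ c A → y ∉ A →
    x ∈ c (A ∪ {y}) → y ∉ c (A ∪ {y})

/-- Condition 5. -/
def Cond5 (c : Set X → Set X) : Prop :=
  ∀ ⦃A B : Set X⦄, A.Nonempty → B ⊆ rC c A → (∃ x y, x ∈ B ∧ y ∈ B ∧ x ≠ y) →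
    ∃ x, x ∉ c B ∧ B = c B ∪ {x}

/-- Conditions 1 and 3 imply No Binary Cycles. -/
theorem cond1_cond3_imply_nbc [Finite X] (c : Set X → Set X) (hc : ChoiceCorr c)
    (h1 : Cond1 c) (h3 : Cond3 c) :
    ∀ x y z : X, x ∈ c {x, y} → y ∈ c {y, z} → x ∈ c {x, z} := by
  intro x y z hxy hyz
  by_cases hxy' : x = y
  · subst hxy'; exact hyz
  by_cases hyz' : y = z
  · subst hyz'; exact hxy
  by_cases hxz' : x = z
  · subst hxz'
    rw [Set.pair_eq_singleton]
    obtain ⟨w, hw⟩ := (hc (Set.singleton_nonempty x)).1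
    have := (hc (Set.singleton_nonempty x)).2 hw
    simp only [Set.mem_singleton_iff] at this
    rwa [this] at hw
  by_contra hx
  -- z is chosen from {x, z}
  have hxzne : ({x, z} : Set X).Nonempty := ⟨x, by simp⟩
  obtain ⟨w, hw⟩ := (hc hxzne).1
  have hw' := (hc hxzne).2 hw
  have hz : z ∈ c {x, z} := by
    rcases hw' with h | h
    · exact absurd (h ▸ hw) hx
    · rwa [h] at hw
  set T : Set X := {x, y, z} with hT
  have hxT : x ∈ T := by simp [hT]
  have hyT : y ∈ T := by simp [hT]
  have hzT : z ∈ T := by simp [hT]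
  have hsub1 : ({x, y} : Set X) ⊂ T := by
    constructor
    · intro a ha; simp only [hT, Set.mem_insert_iff, Set.mem_singleton_iff] at ha ⊢; tauto
    · intro h
      have := h hzT
      rcases this with h | h
      · exact hxz' h.symm
      · exact hyz' h.symm
  have hsub2 : ({y, z} : Set X) ⊂ T := by
    constructor
    · intro a ha; simp only [hT, Set.mem_insert_iff, Set.mem_singleton_iff] at ha ⊢; tauto
    · intro h
      have := h hxT
      rcases this with h | h
      · exact hxy' h
      · exact hxz' h
  have hsub3 : ({x, z} : Set X) ⊂ T := by
    constructor
    · intro a ha; simp only [hT, Set.mem_insert_iff, Set.mem_singleton_iff] at ha ⊢; tauto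
    · intro h
      have := h hyT
      rcases this with h | h
      · exact hxy' h.symm
      · exact hyz' h
  have step1 : y ∈ c T → x ∈ c T := fun h =>
    h1 ⟨x, by simp⟩ hsub1 (by simp) (by simp) hxy h
  have step2 : z ∈ c T → y ∈ c T := fun h =>
    h1 ⟨y, by simp⟩ hsub2 (by simp) (by simp) hyz h
  have step3 : x ∈ c T → z ∈ c T := fun h =>
    h1 ⟨z, by simp⟩ hsub3 (by simp) (by simp) hz h
  have hTne : T.Nonempty := ⟨x, hxT⟩
  obtain ⟨w2, hw2⟩ := (hc hTne).1
  have hw2T := (hc hTne).2 hw2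
  have hall : x ∈ c T ∧ y ∈ c T ∧ z ∈ c T := by
    simp only [hT, Set.mem_insert_iff, Set.mem_singleton_iff] at hw2T
    rcases hw2T with h | h | h
    · subst h; exact ⟨hw2, step2 (step3 hw2), step3 hw2⟩
    · subst h; exact ⟨step1 hw2, hw2, step3 (step1 hw2)⟩
    · subst h; exact ⟨step1 (step2 hw2), step2 hw2, hw2⟩
  obtain ⟨e, heT, hec⟩ := h3 ⟨x, y, hxT, hyT, hxy'⟩
  simp only [hT, Set.mem_insert_iff, Set.mem_singleton_iff] at heT
  rcases heT with h | h | h <;> subst h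
  · exact hec hall.1
  · exact hec hall.2.1
  · exact hec hall.2.2
end

section
/- If a choice correspondence c admits a minimal compromise representation, then c satisfies Condition 1: for all x,y ∈ A ⊂ B with x ∈ c(A) and y ∈ c(B), x ∈ c(B). -/
open Set

variable {X : Type*}

/-- MC representation implies Condition 1. -/
theorem mc_implies_cond1 [Finite X] (c : Set X → Set X) (hc : ChoiceCorr c)
    (hmc : ∃ R L : X → X → Prop, MCRep c R L) : Cond1 c := by
  obtain ⟨R, L, hR, hL, hrep⟩ := hmc
  intro A B x y hA hAB hxA hyA hxcA hycB
  have hB : B.Nonempty := hA.mono hAB.subset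
  have csub : ∀ ⦃S : Set X⦄, S.Nonempty → c S ⊆ maxSet R S := by
    intro S hS z hz
    rcases hrep hS with ⟨h1, h2⟩
    by_cases hsing : ∃ a, maxSet R S = {a}
    · rw [h1 hsing] at hz; exact hz
    · obtain ⟨m, _, heq⟩ := h2 hsing
      rw [heq] at hz; exact hz.1
  have hxmA : x ∈ maxSet R A := csub hA hxcA
  have hymB : y ∈ maxSet R B := csub hB hycB
  have hxmB : x ∈ maxSet R B :=
    ⟨hAB.subset hxA, fun b hb => hR.2 (hxmA.2 y hyA) (hymB.2 b hb)⟩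
  rcases hrep hB with ⟨h1B, h2B⟩
  by_cases hsing : ∃ a, maxSet R B = {a}
  · rw [h1B hsing]; exact hxmB
  · obtain ⟨m, ⟨hmB, hmin⟩, heq⟩ := h2B hsing
    rw [heq]
    refine ⟨hxmB, ?_⟩
    intro hxm
    have hx_eq : x = m := hxm
    have hy : y ∈ maxSet R B \ {m} := heq ▸ hycB
    have hyne : y ≠ m := hy.2
    have hymA : y ∈ maxSet R A := ⟨hyA, fun b hb => hy.1.2 b (hAB.subset hb)⟩
    have hnsA : ¬ ∃ a, maxSet R A = {a} := by
      rintro ⟨a, ha⟩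
      have hx' : x = a := by rw [ha] at hxmA; exact hxmA
      have hy' : y = a := by rw [ha] at hymA; exact hymA
      exact hyne (by rw [hy', ← hx', hx_eq])
    rcases hrep hA with ⟨_, h2A⟩
    obtain ⟨m', ⟨hm'A, hmin'⟩, heqA⟩ := h2A hnsA
    have hxne' : x ≠ m' := by
      rw [heqA] at hxcA; exact hxcA.2
    have hLxm' : L x m' := hmin' x hxmA
    have hm'B : m' ∈ maxSet R B :=
      ⟨hAB.subset hm'A.1, fun b hb => hR.2 (hm'A.2 x hxA) (hxmB.2 b hb)⟩
    have hLm'x : L m' x := by rw [hx_eq]; exact hmin m' hm'B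
    exact hxne' (hL.2 hLxm' hLm'x)
end

section
/- If a choice correspondence c admits a minimal compromise representation, then r^c satisfies Condition 2: for all x, y and menus A ⊂ B with x, y ∈ A, if x ∈ r^c(A) and y ∈ r^c(B), then x ∈ r^c(B), where r^c(S) = {z ∈ S : c(S \ {z}) ≠ c(S)} for |S| ≥ 2 and r^c(S) = S for singletons. -/
open Set

variable {X : Type*}

section Aux

variable {R L : X → X → Prop} {c : Set X → Set X}

lemma weak_refl (hR : WeakOrd R) (x : X) : R x x := (hR.1 x x).elim id id

lemma mem_maxSet {A : Set X} {x : X} :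
    x ∈ maxSet R A ↔ x ∈ A ∧ ∀ y ∈ A, R x y := Iff.rfl

lemma maxSet_nonempty [Finite X] (hR : WeakOrd R) :
    ∀ {A : Set X}, A.Nonempty → (maxSet R A).Nonempty := by
  intro A
  refine Set.Finite.induction_on A (Set.toFinite A) (fun h => absurd h (by simp)) ?_
  intro a s ha hs ih _
  rcases s.eq_empty_or_nonempty with rfl | hsne
  · refine ⟨a, mem_insert a ∅, ?_⟩
    rintro y (rfl | hy)
    · exact weak_refl hR _
    · simp at hy
  · obtain ⟨z, hzs, hz⟩ := ih hsne
    rcases hR.1 z a with h | h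
    · refine ⟨z, Or.inr hzs, ?_⟩
      rintro y (rfl | hy)
      · exact h
      · exact hz y hy
    · refine ⟨a, Or.inl rfl, ?_⟩
      rintro y (rfl | hy)
      · exact weak_refl hR _
      · exact hR.2 h (hz y hy)

lemma maxSet_mono_elem (hR : WeakOrd R) {A B : Set X} {x y : X} (hAB : A ⊆ B)
    (hy : y ∈ maxSet R B) (hyA : y ∈ A) (hx : x ∈ maxSet R A) : x ∈ maxSet R B :=
  ⟨hAB hx.1, fun w hw => hR.2 (hx.2 y hyA) (hy.2 w hw)⟩

lemma maxSet_remove_nonmax (hR : WeakOrd R) {A : Set X} {x : X} (hxA : x ∈ A)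
    (hne : (maxSet R A).Nonempty) (hx : x ∉ maxSet R A) :
    maxSet R (A \ {x}) = maxSet R A := by
  ext z
  constructor
  · rintro ⟨⟨hzA, hzx⟩, hdom⟩
    refine ⟨hzA, fun w hw => ?_⟩
    by_cases hwx : w = x
    · obtain ⟨u, huA, hu⟩ := hne
      have hux : u ≠ x := fun h => hx (h ▸ (⟨huA, hu⟩ : u ∈ maxSet R A))
      rw [hwx]
      exact hR.2 (hdom u ⟨huA, hux⟩) (hu x hxA)
    · exact hdom w ⟨hw, hwx⟩
  · rintro ⟨hzA, hdom⟩
    have hzx : z ≠ x := fun h => hx (h ▸ ⟨hzA, hdom⟩)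
    exact ⟨⟨hzA, hzx⟩, fun w hw => hdom w hw.1⟩

lemma maxSet_remove_max (hR : WeakOrd R) {A : Set X} {x : X}
    (hx : x ∈ maxSet R A) (hne : (maxSet R A \ {x}).Nonempty) :
    maxSet R (A \ {x}) = maxSet R A \ {x} := by
  ext z
  constructor
  · rintro ⟨⟨hzA, hzx⟩, hdom⟩
    obtain ⟨u, ⟨huA, hu⟩, hux⟩ := hne
    refine ⟨⟨hzA, fun w hw => ?_⟩, hzx⟩
    by_cases hwx : w = x
    · rw [hwx]
      exact hR.2 (hdom u ⟨huA, hux⟩) (hu x hx.1)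
    · exact hdom w ⟨hw, hwx⟩
  · rintro ⟨⟨hzA, hdom⟩, hzx⟩
    exact ⟨⟨hzA, hzx⟩, fun w hw => hdom w hw.1⟩

lemma min_unique (hL : LinOrdRel L) {S : Set X} {m m' : X}
    (h : IsMinOf L S m) (h' : IsMinOf L S m') : m = m' :=
  hL.2 (h'.2 m h.1) (h.2 m' h'.1)

lemma c_eq_of_max_eq (hrep : MCRep c R L) {A A' : Set X} (hA : A.Nonempty)
    (hA' : A'.Nonempty) (h : maxSet R A = maxSet R A') : c A = c A' := by
  obtain ⟨hR, hL, hform⟩ := hrep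
  by_cases hs : ∃ a, maxSet R A = {a}
  · rw [(hform hA).1 hs, (hform hA').1 (h ▸ hs), h]
  · obtain ⟨m, hm, hcA⟩ := (hform hA).2 hs
    obtain ⟨m', hm', hcA'⟩ := (hform hA').2 (fun ⟨a, ha⟩ => hs ⟨a, h ▸ ha⟩)
    rw [← h] at hm'
    rw [hcA, hcA', h, min_unique hL hm hm']

lemma rC_subset_max [Finite X] (hrep : MCRep c R L) {A : Set X} {x : X}
    (hx : x ∈ rC c A) : x ∈ maxSet R A := by
  obtain ⟨hxA, hcase⟩ := hx
  have hR := hrep.1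
  rcases hcase with ⟨a, ha⟩ | hne
  · subst ha
    rcases hxA with rfl
    exact ⟨rfl, fun y hy => by rcases hy with rfl; exact weak_refl hR _⟩
  · by_contra hxM
    have hMne : (maxSet R A).Nonempty := maxSet_nonempty hR ⟨x, hxA⟩
    have hAx : (A \ {x}).Nonempty := by
      obtain ⟨u, huA, hu⟩ := hMne
      exact ⟨u, huA, fun h => hxM (h ▸ ⟨huA, hu⟩)⟩
    exact hne (c_eq_of_max_eq hrep hAx ⟨x, hxA⟩
      (maxSet_remove_nonmax hR hxA hMne hxM))

end Aux

/-- MC representation implies Condition 2 (for r^c). -/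
theorem mc_implies_cond2 [Finite X] (c : Set X → Set X) (hc : ChoiceCorr c)
    (hmc : ∃ R L : X → X → Prop, MCRep c R L) : Cond2 c := by
  obtain ⟨R, L, hrep⟩ := hmc
  obtain ⟨hR, hL, hform⟩ := hrep
  have hrep' : MCRep c R L := ⟨hR, hL, hform⟩
  intro A B x y hA hAB hxA hyA hxrA hyrB
  have hxB : x ∈ B := hAB.subset hxA
  by_cases hBsing : ∃ b, B = {b}
  · exact ⟨hxB, Or.inl hBsing⟩
  have hB : B.Nonempty := ⟨x, hxB⟩
  have hxMA : x ∈ maxSet R A := rC_subset_max hrep' hxrA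
  have hyMB : y ∈ maxSet R B := rC_subset_max hrep' hyrB
  have hxMB : x ∈ maxSet R B := maxSet_mono_elem hR hAB.subset hyMB hyA hxMA
  obtain ⟨b0, hb0B, hb0x⟩ : ∃ b ∈ B, b ≠ x := by
    by_contra h
    push_neg at h
    exact hBsing ⟨x, Set.eq_singleton_iff_unique_mem.mpr ⟨hxB, h⟩⟩
  have hBx_ne : (B \ {x}).Nonempty := ⟨b0, hb0B, hb0x⟩
  refine ⟨hxB, Or.inr ?_⟩
  by_cases hMBx : (maxSet R B \ {x}).Nonempty
  · have hmaxBx : maxSet R (B \ {x}) = maxSet R B \ {x} :=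
      maxSet_remove_max hR hxMB hMBx
    have hMBs : ¬ ∃ a, maxSet R B = {a} := by
      rintro ⟨a, ha⟩
      have hax : a = x := by
        have := hxMB
        rw [ha] at this
        exact this.symm
      obtain ⟨u, hu⟩ := hMBx
      rw [ha, hax] at hu
      exact hu.2 hu.1
    obtain ⟨m, hm, hcB⟩ := (hform hB).2 hMBs
    by_cases hxm : x = m
    · subst hxm
      by_cases hMBxs : ∃ a, maxSet R B \ {x} = {a}
      · obtain ⟨b, hb⟩ := hMBxs
        have hbmem : b ∈ maxSet R B \ {x} := by rw [hb]; exact rfl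
        have hbMB : b ∈ maxSet R B := hbmem.1
        have hbx : b ≠ x := hbmem.2
        have hMBsub : ∀ z ∈ maxSet R B, z = x ∨ z = b := by
          intro z hz
          by_cases h : z = x
          · exact Or.inl h
          · right
            have : z ∈ maxSet R B \ {x} := ⟨hz, h⟩
            rw [hb] at this
            exact this
        have hcBval : c B = {b} := by
          rw [hcB, ← hb]
        rcases hMBsub y hyMB with rfl | rfl
        · -- y = x : contradiction with y ∈ rC B
          exfalso
          obtain ⟨-, hy2⟩ := hyrB
          rcases hy2 with hs | hne
          · exact hBsing hs
          · apply hne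
            have h1 : c (B \ {y}) = maxSet R (B \ {y}) :=
              (hform hBx_ne).1 ⟨b, by rw [hmaxBx, hb]⟩
            rw [h1, hmaxBx, hb, hcBval]
        · -- y = y : contradiction with x ∈ rC A
          exfalso
          obtain ⟨-, hx2⟩ := hxrA
          rcases hx2 with ⟨a, ha⟩ | hne
          · exact hbx ((Set.mem_singleton_iff.mp (ha ▸ hyA)).trans
              (Set.mem_singleton_iff.mp (ha ▸ hxA)).symm)
          · apply hne
            have hbMA : y ∈ maxSet R A :=
              ⟨hyA, fun w hw => hbMB.2 w (hAB.subset hw)⟩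
            have hMAsub : ∀ z ∈ maxSet R A, z = x ∨ z = y := fun z hz =>
              hMBsub z (maxSet_mono_elem hR hAB.subset hbMB hyA hz)
            have hMAs : ¬ ∃ a, maxSet R A = {a} := by
              rintro ⟨a, ha⟩
              apply hbx
              have h1 : x = a := by
                have := hxMA; rw [ha] at this; exact this
              have h2 : y = a := by
                have := hbMA; rw [ha] at this; exact this
              rw [h1, h2]
            obtain ⟨mA, hmA, hcA⟩ := (hform hA).2 hMAs
            have hmAx : mA = x := by
              have h1 : L mA x := hm.2 mA (maxSet_mono_elem hR hAB.subset hbMB hyA hmA.1)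
              have h2 : L x mA := hmA.2 x hxMA
              exact hL.2 h1 h2
            have hMAx : maxSet R A \ {x} = {y} := by
              ext z
              constructor
              · rintro ⟨hz, hzx⟩
                rcases hMAsub z hz with h | h
                · exact absurd h hzx
                · exact h
              · rintro rfl
                exact ⟨hbMA, hbx⟩
            have hmaxAx : maxSet R (A \ {x}) = maxSet R A \ {x} :=
              maxSet_remove_max hR hxMA ⟨y, hbMA, hbx⟩
            have hAx_ne : (A \ {x}).Nonempty := ⟨y, hyA, hbx⟩
            have h1 : c (A \ {x}) = maxSet R (A \ {x}) :=
              (hform hAx_ne).1 ⟨y, by rw [hmaxAx, hMAx]⟩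
            rw [h1, hmaxAx, hMAx, hcA, hmAx, hMAx]
      · -- maxSet R B minus x has at least two elements
        obtain ⟨m', hm', hcBx⟩ := (hform hBx_ne).2 (by rw [hmaxBx]; exact hMBxs)
        rw [hmaxBx] at hm'
        intro heq
        have h1 : m' ∈ c B := by
          rw [hcB]
          exact ⟨hm'.1.1, hm'.1.2⟩
        have h2 : m' ∉ c (B \ {x}) := by
          rw [hcBx]
          exact fun h => h.2 rfl
        rw [heq] at h2
        exact h2 h1
    · -- x ≠ m : x ∈ c B but x ∉ c (B \ {x})
      intro heq
      have hxcB : x ∈ c B := by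
        rw [hcB]
        exact ⟨hxMB, hxm⟩
      rw [← heq] at hxcB
      exact ((hc hBx_ne).2 hxcB).2 rfl
  · -- maxSet R B = {x}
    have hMB : maxSet R B = {x} := by
      ext z
      constructor
      · intro hz
        by_contra hzx
        exact hMBx ⟨z, hz, hzx⟩
      · rintro rfl
        exact hxMB
    have hcB : c B = {x} := by
      rw [(hform hB).1 ⟨x, hMB⟩, hMB]
    intro heq
    have : x ∈ c (B \ {x}) := by
      rw [heq, hcB]
      exact rfl
    exact ((hc hBx_ne).2 this).2 rfl
end

section
/- If a choice correspondence c admits a minimal compromise representation, then c satisfies Condition 4: for any menu A, alternative x ∈ A \ c(A), and alternative y ∉ A, if x ∈ c(A ∪ {y}) then y ∉ c(A ∪ {y}). -/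
open Set

variable {X : Type*}

/-- MC representation implies Condition 4. -/
theorem mc_implies_cond4 [Finite X] (c : Set X → Set X) (hc : ChoiceCorr c)
    (hmc : ∃ R L : X → X → Prop, MCRep c R L) : Cond4 c := by
  obtain ⟨R, L, hR, hL, hrep⟩ := hmc
  intro A x y hA hxA hxcA hyA hxcB hycB
  set B := A ∪ {y} with hBdef
  have hBne : B.Nonempty := ⟨x, Or.inl hxA⟩
  have hyB : y ∈ B := Or.inr rfl
  -- c B ⊆ maxSet R B
  have hcBsub : c B ⊆ maxSet R B := by
    rcases Classical.em (∃ a, maxSet R B = {a}) with hs | hs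
    · rw [(hrep hBne).1 hs]
    · obtain ⟨m, hm, hcB⟩ := (hrep hBne).2 hs
      rw [hcB]; exact diff_subset
  have hxmaxB : x ∈ maxSet R B := hcBsub hxcB
  have hymaxB : y ∈ maxSet R B := hcBsub hycB
  -- x ∈ maxSet R A
  have hxmaxA : x ∈ maxSet R A := ⟨hxA, fun w hw => hxmaxB.2 w (Or.inl hw)⟩
  -- c A case analysis: x must be the L-min of maxSet R A
  have hxmin : IsMinOf L (maxSet R A) x := by
    rcases Classical.em (∃ a, maxSet R A = {a}) with ⟨a, ha⟩ | hs
    · exfalso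
      have : x = a := by rw [ha] at hxmaxA; exact hxmaxA
      have := (hrep hA).1 ⟨a, ha⟩
      rw [this, ha] at hxcA
      exact hxcA (by simp [‹x = a›])
    · obtain ⟨m, hm, hcA⟩ := (hrep hA).2 hs
      have hxm : x = m := by
        by_contra hne
        exact hxcA (by rw [hcA]; exact ⟨hxmaxA, hne⟩)
      rw [hxm]; exact hm
  -- B case analysis
  rcases Classical.em (∃ a, maxSet R B = {a}) with ⟨a, ha⟩ | hs
  · have hx : x = a := by rw [ha] at hxmaxB; exact hxmaxB
    have hy : y = a := by rw [ha] at hymaxB; exact hymaxB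
    exact hyA (by rw [hy, ← hx]; exact hxA)
  · obtain ⟨m, hm, hcB⟩ := (hrep hBne).2 hs
    rw [hcB] at hxcB hycB
    -- m ≠ y, so m ∈ maxSet R A
    have hmy : m ≠ y := fun h => hycB.2 h.symm
    have hmA : m ∈ A := hm.1.1.resolve_right hmy
    have hmmaxA : m ∈ maxSet R A := ⟨hmA, fun w hw => hm.1.2 w (Or.inl hw)⟩
    -- L m x (x is min of maxSet R A) and L x m (m is min of maxSet R B)
    have h1 : L m x := hxmin.2 m hmmaxA
    have h2 : L x m := hm.2 x hxmaxB
    exact hxcB.2 (hL.2 h2 h1)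
end

section
/- If a choice correspondence c admits a minimal compromise representation, then c satisfies Condition 5: for every menu A and every nonsingleton B ⊆ r^c(A), there exists x ∉ c(B) such that B = c(B) ∪ {x}; i.e., exactly one element of B is unchosen from B. -/
open Set

variable {X : Type*}

/-- MC representation implies Condition 5. -/
theorem mc_implies_cond5 [Finite X] (c : Set X → Set X) (hc : ChoiceCorr c)
    (hmc : ∃ R L : X → X → Prop, MCRep c R L) : Cond5 c := by
  obtain ⟨R, L, hR, hL, hrep⟩ := hmc
  rintro A B hA hBr ⟨x, y, hxB, hyB, hxy⟩
  have hRrefl : ∀ z, R z z := fun z => (hR.1 z z).elim id id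
  have hAnots : ¬ ∃ a, A = {a} := by
    rintro ⟨a, rfl⟩
    have h1 := (hBr hxB).1
    have h2 := (hBr hyB).1
    simp only [mem_singleton_iff] at h1 h2
    exact hxy (h1.trans h2.symm)
  -- every element of B is R-maximal in A
  have hBmax : B ⊆ maxSet R A := by
    intro b hb
    obtain ⟨hbA, hor⟩ := hBr hb
    rcases hor with hs | hne
    · exact absurd hs hAnots
    by_contra hbnot
    apply hne
    simp only [maxSet, mem_setOf_eq, not_and, not_forall] at hbnot
    obtain ⟨z, hzA, hz⟩ := hbnot hbA
    have hRzb : R z b := (hR.1 b z).resolve_left hz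
    have hzb : z ≠ b := fun h => hz (h ▸ hRrefl z)
    have hzmem : z ∈ A \ {b} := ⟨hzA, hzb⟩
    have hmaxeq : maxSet R (A \ {b}) = maxSet R A := by
      ext w
      constructor
      · rintro ⟨⟨hwA, _⟩, hw⟩
        refine ⟨hwA, fun u hu => ?_⟩
        rcases eq_or_ne u b with rfl | hub
        · exact hR.2 (hw z hzmem) hRzb
        · exact hw u ⟨hu, hub⟩
      · rintro ⟨hwA, hw⟩
        have hwb : w ≠ b := by
          rintro rfl; exact hz (hw z hzA)
        exact ⟨⟨hwA, hwb⟩, fun u hu => hw u hu.1⟩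
    have hA'ne : (A \ {b}).Nonempty := ⟨z, hzmem⟩
    by_cases hsing : ∃ a, maxSet R A = {a}
    · rw [(hrep hA'ne).1 (hmaxeq ▸ hsing), (hrep hA).1 hsing, hmaxeq]
    · obtain ⟨m1, hm1, hc1⟩ := (hrep hA'ne).2 (hmaxeq ▸ hsing)
      obtain ⟨m2, hm2, hc2⟩ := (hrep hA).2 hsing
      rw [hmaxeq] at hm1 hc1
      have : m1 = m2 := hL.2 (hm2.2 m1 hm1.1) (hm1.2 m2 hm2.1)
      rw [hc1, hc2, this]
  have hmaxB : maxSet R B = B := by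
    ext b
    refine ⟨fun h => h.1, fun hb => ⟨hb, fun u hu => (hBmax hb).2 u (hBmax hu).1⟩⟩
  have hBns : ¬ ∃ a, maxSet R B = {a} := by
    rw [hmaxB]
    rintro ⟨a, rfl⟩
    simp only [mem_singleton_iff] at hxB hyB
    exact hxy (hxB.trans hyB.symm)
  obtain ⟨m, hm, hcB⟩ := (hrep ⟨x, hxB⟩).2 hBns
  rw [hmaxB] at hm hcB
  refine ⟨m, ?_, ?_⟩
  · rw [hcB]; exact fun h => h.2 rfl
  · rw [hcB]
    ext u
    simp only [mem_union, mem_diff, mem_singleton_iff]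
    constructor
    · intro hu
      rcases eq_or_ne u m with rfl | hum
      · exact Or.inr rfl
      · exact Or.inl ⟨hu, hum⟩
    · rintro (⟨hu, _⟩ | rfl)
      · exact hu
      · exact hm.1
end

section
/- Suppose a choice correspondence c satisfies Conditions 1–5. Define xRy iff there exists a menu A with x ∈ r^c(A) and y ∈ A. Then R is a weak order (complete and transitive) on X. -/
open Set

variable {X : Type*}

/-- Chosen elements are always relevant. -/
lemma cSubRC_aux {c : Set X → Set X} (hc : ChoiceCorr c) {A : Set X}
    (hA : A.Nonempty) : c A ⊆ rC c A := by
  intro x hx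
  have hxA : x ∈ A := (hc hA).2 hx
  refine ⟨hxA, ?_⟩
  by_cases hsing : ∃ a, A = ({a} : Set X)
  · exact Or.inl hsing
  · refine Or.inr fun heq => ?_
    have hne : (A \ {x}).Nonempty := by
      by_contra hcon
      rw [Set.not_nonempty_iff_eq_empty, Set.diff_eq_empty] at hcon
      exact hsing ⟨x, Set.Subset.antisymm hcon (Set.singleton_subset_iff.2 hxA)⟩
    have hmem : x ∈ A \ {x} := (hc hne).2 (heq ▸ hx)
    exact hmem.2 rfl

/-- Expansion monotonicity for revealed relevance. -/
lemma rC_mono_aux {c : Set X → Set X} (h2 : Cond2 c) {A B : Set X}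
    (hAB : A ⊆ B) (hy : ∃ y ∈ A, y ∈ rC c B) : rC c A ⊆ rC c B := by
  rcases hAB.ssubset_or_eq with hss | rfl
  · intro x hx
    obtain ⟨y, hyA, hyB⟩ := hy
    exact h2 ⟨x, hx.1⟩ hss hx.1 hyA hx hyB
  · exact fun x hx => hx

/-- under Conditions 1–5, the revealed relation
xRy iff x ∈ r^c(A) and y ∈ A for some menu A, is a weak order. -/
theorem revealed_R_weak_order [Finite X] (c : Set X → Set X) (hc : ChoiceCorr c)
    (h1 : Cond1 c) (h2 : Cond2 c) (h3 : Cond3 c) (h4 : Cond4 c) (h5 : Cond5 c) :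
    WeakOrd (fun x y : X => ∃ A : Set X, A.Nonempty ∧ x ∈ rC c A ∧ y ∈ A) := by
  constructor
  · -- completeness
    intro x y
    by_cases hxy : x = y
    · subst hxy
      exact Or.inl ⟨{x}, Set.singleton_nonempty x, ⟨rfl, Or.inl ⟨x, rfl⟩⟩, rfl⟩
    · set A : Set X := {x, y} with hAdef
      have hA : A.Nonempty := ⟨x, Or.inl rfl⟩
      obtain ⟨u, hu⟩ := (hc hA).1
      have huA : u ∈ A := (hc hA).2 hu
      have hurc : u ∈ rC c A := cSubRC_aux hc hA hu
      rcases huA with h | h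
      · exact Or.inl ⟨A, hA, h ▸ hurc, Or.inr rfl⟩
      · exact Or.inr ⟨A, hA, h ▸ hurc, Or.inl rfl⟩
  · -- transitivity
    rintro x y z ⟨A, hA, hxA, hyA⟩ ⟨B, hB, hyB, hzB⟩
    by_cases h : ∃ w ∈ A, w ∈ rC c (A ∪ B)
    · exact ⟨A ∪ B, hA.mono Set.subset_union_left,
        rC_mono_aux h2 Set.subset_union_left h hxA, Or.inr hzB⟩
    · exfalso
      have hD : (A ∪ B).Nonempty := hA.mono Set.subset_union_left
      obtain ⟨u, hu⟩ := (hc hD).1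
      have hurc : u ∈ rC c (A ∪ B) := cSubRC_aux hc hD hu
      have huB : u ∈ B := by
        rcases hurc.1 with huA | huB
        · exact absurd ⟨u, huA, hurc⟩ h
        · exact huB
      have hsub : rC c B ⊆ rC c (A ∪ B) :=
        rC_mono_aux h2 Set.subset_union_right ⟨u, huB, hurc⟩
      exact h ⟨y, hyA, hsub hyB⟩
end

section
/- Suppose a choice correspondence c satisfies Conditions 1 and 3. Define xLy iff x = y or c({x,y}) = {x}. Then L is a linear order on X (complete, transitive, and antisymmetric). -/
open Set

variable {X : Type*}

lemma pair_choice (c : Set X → Set X) (hc : ChoiceCorr c) (h3 : Cond3 c)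
    {x y : X} (hxy : x ≠ y) : c {x, y} = {x} ∨ c {x, y} = {y} := by
  have hne : ({x, y} : Set X).Nonempty := ⟨x, by simp⟩
  obtain ⟨hcne, hcsub⟩ := hc hne
  obtain ⟨a, ha, hna⟩ := h3 (A := {x, y}) ⟨x, y, by simp, by simp, hxy⟩
  rcases ha with rfl | rfl
  · right
    apply Set.Subset.antisymm
    · intro z hz
      rcases hcsub hz with rfl | rfl
      · exact absurd hz hna
      · exact rfl
    · obtain ⟨b, hb⟩ := hcne
      rcases hcsub hb with rfl | rfl
      · exact absurd hb hna
      · intro z hz; rcases hz with rfl; exact hb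
  · left
    apply Set.Subset.antisymm
    · intro z hz
      rcases hcsub hz with rfl | rfl
      · exact rfl
      · exact absurd hz hna
    · obtain ⟨b, hb⟩ := hcne
      rcases hcsub hb with rfl | rfl
      · intro z hz; rcases hz with rfl; exact hb
      · exact absurd hb hna

/-- under Conditions 1 and 3, the revealed relation
xLy iff x = y or c({x,y}) = {x}, is a linear order. -/
theorem revealed_L_linear_order [Finite X] (c : Set X → Set X) (hc : ChoiceCorr c)
    (h1 : Cond1 c) (h3 : Cond3 c) :
    LinOrdRel (fun x y : X => x = y ∨ c {x, y} = {x}) := by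
  refine ⟨⟨?_, ?_⟩, ?_⟩
  · -- completeness
    intro x y
    by_cases hxy : x = y
    · exact Or.inl (Or.inl hxy)
    rcases pair_choice c hc h3 hxy with h | h
    · exact Or.inl (Or.inr h)
    · right; right; rwa [Set.pair_comm y x]
  · -- transitivity
    intro x y z hxy hyz
    by_cases hxz : x = z
    · exact Or.inl hxz
    rcases hxy with rfl | hxy
    · exact hyz
    rcases hyz with rfl | hyz
    · exact Or.inr hxy
    -- now c {x,y} = {x}, c {y,z} = {y}, x ≠ z
    by_cases hxy' : x = y
    · subst hxy'; exact Or.inr hyz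
    by_cases hyz' : y = z
    · subst hyz'; exact Or.inr hxy
    right
    rcases pair_choice c hc h3 hxz with h | h
    · exact h
    -- suppose c {x,z} = {z}; derive contradiction via A = {x,y,z}
    exfalso
    set A : Set X := {x, y, z} with hA
    have hxA : x ∈ A := by simp [hA]
    have hyA : y ∈ A := by simp [hA]
    have hzA : z ∈ A := by simp [hA]
    have hAne : A.Nonempty := ⟨x, hxA⟩
    obtain ⟨hcne, hcsub⟩ := hc hAne
    obtain ⟨w, hwA, hwn⟩ := h3 ⟨x, y, hxA, hyA, hxy'⟩
    have hss1 : ({x, y} : Set X) ⊂ A := by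
      constructor
      · intro u hu; rcases hu with rfl | rfl; exacts [hxA, hyA]
      · intro hsub
        rcases hsub hzA with rfl | rfl
        · exact hxz rfl
        · exact hyz' rfl
    have hss2 : ({y, z} : Set X) ⊂ A := by
      constructor
      · intro u hu; rcases hu with rfl | rfl; exacts [hyA, hzA]
      · intro hsub
        rcases hsub hxA with rfl | rfl
        · exact hxy' rfl
        · exact hxz rfl
    have hss3 : ({x, z} : Set X) ⊂ A := by
      constructor
      · intro u hu; rcases hu with rfl | rfl; exacts [hxA, hzA]
      · intro hsub
        rcases hsub hyA with rfl | rfl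
        · exact hxy' rfl
        · exact hyz' rfl
    have hy_to_x : y ∈ c A → x ∈ c A := fun hyc =>
      h1 ⟨x, by simp⟩ hss1 (by simp) (by simp) (by rw [hxy]; rfl) hyc
    have hz_to_y : z ∈ c A → y ∈ c A := fun hzc =>
      h1 ⟨y, by simp⟩ hss2 (by simp) (by simp) (by rw [hyz]; rfl) hzc
    have hx_to_z : x ∈ c A → z ∈ c A := fun hxc =>
      h1 ⟨z, by simp⟩ hss3 (by simp) (by simp) (by rw [h]; rfl) hxc
    obtain ⟨a, ha⟩ := hcne
    have hall : x ∈ c A ∧ y ∈ c A ∧ z ∈ c A := by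
      rcases hcsub ha with rfl | rfl | rfl
      · exact ⟨ha, hz_to_y (hx_to_z ha), hx_to_z ha⟩
      · exact ⟨hy_to_x ha, ha, hx_to_z (hy_to_x ha)⟩
      · exact ⟨hy_to_x (hz_to_y ha), hz_to_y ha, ha⟩
    rcases hwA with rfl | rfl | rfl
    · exact hwn hall.1
    · exact hwn hall.2.1
    · exact hwn hall.2.2
  · -- antisymmetry
    intro x y hxy hyx
    rcases hxy with rfl | hxy
    · rfl
    rcases hyx with rfl | hyx
    · rfl
    rw [Set.pair_comm y x] at hyx
    rw [hxy] at hyx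
    exact Set.singleton_eq_singleton_iff.mp hyx
end

section
/- A choice correspondence c admits a minimal compromise representation if and only if it satisfies Conditions 1–5. -/
open Set

variable {X : Type*}

namespace MCAux

variable {c : Set X → Set X} {R L : X → X → Prop}

lemma maxSet_subset {A : Set X} : maxSet R A ⊆ A := fun _ hx => hx.1

lemma maxSet_nonempty [Finite X] (hR : WeakOrd R) {A : Set X} (hA : A.Nonempty) :
    (maxSet R A).Nonempty := by
  have hfin : A.Finite := Set.toFinite A
  revert hA
  refine Set.Finite.induction_on (motive := fun s _ => s.Nonempty → (maxSet R s).Nonempty) A hfin ?_ ?_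
  · rintro ⟨x, hx⟩; exact absurd hx (notMem_empty x)
  · intro a s _ _ ih _
    rcases s.eq_empty_or_nonempty with rfl | hsne
    · refine ⟨a, mem_insert _ _, ?_⟩
      rintro y (rfl | hy)
      · exact (hR.1 y y).elim id id
      · exact absurd hy (notMem_empty y)
    · obtain ⟨m, hm⟩ := ih hsne
      rcases hR.1 m a with h | h
      · refine ⟨m, mem_insert_of_mem _ hm.1, ?_⟩
        rintro y (rfl | hy)
        · exact h
        · exact hm.2 y hy
      · refine ⟨a, mem_insert _ _, ?_⟩
        rintro y (rfl | hy)
        · exact (hR.1 y y).elim id id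
        · exact hR.2 h (hm.2 y hy)

lemma min_unique (hL : LinOrdRel L) {S : Set X} {m m' : X}
    (h : IsMinOf L S m) (h' : IsMinOf L S m') : m = m' :=
  hL.2 (h'.2 m h.1) (h.2 m' h'.1)

lemma c_subset_maxSet (hrep : MCRep c R L) {A : Set X} (hA : A.Nonempty) :
    c A ⊆ maxSet R A := by
  obtain ⟨h1, h2⟩ := hrep.2.2 hA
  by_cases hs : ∃ a, maxSet R A = {a}
  · rw [h1 hs]
  · obtain ⟨m, _, he⟩ := h2 hs
    rw [he]; exact diff_subset

lemma maxSet_inter (hR : WeakOrd R) {A B : Set X} (hBA : B ⊆ A) {y : X}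
    (hy : y ∈ maxSet R A) (hyB : y ∈ B) : maxSet R B = maxSet R A ∩ B := by
  ext z
  constructor
  · intro hz
    exact ⟨⟨hBA hz.1, fun w hw => hR.2 (hz.2 y hyB) (hy.2 w hw)⟩, hz.1⟩
  · rintro ⟨hzA, hzB⟩
    exact ⟨hzB, fun w hw => hzA.2 w (hBA hw)⟩

/-- removing a non-maximal element does not change the choice -/
lemma c_diff_eq [Finite X] (hR : WeakOrd R) (hL : LinOrdRel L) (hrep : MCRep c R L)
    {A : Set X} (hA : A.Nonempty) {x : X} (hx : x ∉ maxSet R A) :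
    c (A \ {x}) = c A := by
  obtain ⟨y, hy⟩ := maxSet_nonempty hR hA
  have hMsub : maxSet R A ⊆ A \ {x} := fun z hz => ⟨hz.1, fun h => hx (h ▸ hz)⟩
  have hA' : (A \ {x}).Nonempty := ⟨y, hMsub hy⟩
  have hMeq : maxSet R (A \ {x}) = maxSet R A := by
    rw [maxSet_inter hR diff_subset hy (hMsub hy)]
    exact inter_eq_left.2 hMsub
  obtain ⟨h1, h2⟩ := hrep.2.2 hA
  obtain ⟨h1', h2'⟩ := hrep.2.2 hA'
  by_cases hs : ∃ a, maxSet R A = {a}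
  · rw [h1 hs, h1' (hMeq ▸ hs), hMeq]
  · obtain ⟨m, hm, he⟩ := h2 hs
    obtain ⟨m', hm', he'⟩ := h2' (by rw [hMeq]; exact hs)
    rw [hMeq] at hm' he'
    rw [he, he', min_unique hL hm' hm]

lemma rC_subset_maxSet [Finite X] (hR : WeakOrd R) (hL : LinOrdRel L) (hrep : MCRep c R L)
    {A : Set X} (hA : A.Nonempty) : rC c A ⊆ maxSet R A := by
  intro x hx
  by_contra hxM
  rcases hx.2 with ⟨a, ha⟩ | hne
  · have hxa : x = a := by rw [← mem_singleton_iff, ← ha]; exact hx.1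
    subst hxa
    refine hxM ⟨hx.1, ?_⟩
    intro y hy
    have : y = x := by rw [← mem_singleton_iff, ← ha]; exact hy
    subst this
    exact (hR.1 y y).elim id id
  · exact hne (c_diff_eq hR hL hrep hA hxM)

lemma not_singleton_of_two {A : Set X} {x y : X} (hx : x ∈ A) (hy : y ∈ A) (hxy : x ≠ y) :
    ¬ ∃ a, A = {a} := by
  rintro ⟨a, rfl⟩
  exact hxy ((mem_singleton_iff.1 hx).trans (mem_singleton_iff.1 hy).symm)

/-- existence of a second maximal element when the max set is not a singleton -/
lemma exists_second {A : Set X} (hne : (maxSet R A).Nonempty) (hs : ¬ ∃ a, maxSet R A = {a})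
    {m : X} (hm : m ∈ maxSet R A) : ∃ b ∈ maxSet R A, b ≠ m := by
  by_contra h
  push_neg at h
  refine hs ⟨m, Subset.antisymm (fun z hz => h z hz) (by rintro z rfl; exact hm)⟩

section Conds
variable [Finite X] (hR : WeakOrd R) (hL : LinOrdRel L) (hrep : MCRep c R L)
include hR hL hrep

lemma cond1_of : Cond1 c := by
  intro A B x y hA hAB hxA hyA hxcA hycB
  have hB : B.Nonempty := hA.mono hAB.subset
  have hyMB : y ∈ maxSet R B := c_subset_maxSet hrep hB hycB
  have hMA : maxSet R A = maxSet R B ∩ A := maxSet_inter hR hAB.subset hyMB hyA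
  have hxMA : x ∈ maxSet R A := c_subset_maxSet hrep hA hxcA
  have hxMB : x ∈ maxSet R B := (hMA ▸ hxMA).1
  obtain ⟨h1, h2⟩ := hrep.2.2 hB
  by_cases hs : ∃ a, maxSet R B = {a}
  · rw [h1 hs]; exact hxMB
  · obtain ⟨m, hm, he⟩ := h2 hs
    rw [he]
    refine ⟨hxMB, fun hxm => ?_⟩
    -- x = m : the L-min of maxSet R B; derive contradiction
    rw [mem_singleton_iff] at hxm
    subst hxm
    have hyMA : y ∈ maxSet R A := hMA ▸ ⟨hyMB, hyA⟩
    have hminA : IsMinOf L (maxSet R A) x :=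
      ⟨hxMA, fun z hz => hm.2 z (hMA ▸ hz).1⟩
    obtain ⟨g1, g2⟩ := hrep.2.2 hA
    by_cases hsA : ∃ a, maxSet R A = {a}
    · obtain ⟨a, ha⟩ := hsA
      have : x = a := by rw [← mem_singleton_iff, ← ha]; exact hxMA
      have hya : y = a := by rw [← mem_singleton_iff, ← ha]; exact hyMA
      have : y = x := hya.trans this.symm
      subst this
      rw [he] at hycB
      exact hycB.2 rfl
    · obtain ⟨mA, hmA, heA⟩ := g2 hsA
      have : mA = x := min_unique hL hmA hminA
      subst this
      rw [heA] at hxcA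
      exact hxcA.2 rfl

lemma cond2_of (hc : ChoiceCorr c) : Cond2 c := by
  intro A B x y hA hAB hxA hyA hxrA hyrB
  have hB : B.Nonempty := hA.mono hAB.subset
  have hxMA : x ∈ maxSet R A := rC_subset_maxSet hR hL hrep hA hxrA
  have hyMB : y ∈ maxSet R B := rC_subset_maxSet hR hL hrep hB hyrB
  have hMA : maxSet R A = maxSet R B ∩ A := maxSet_inter hR hAB.subset hyMB hyA
  have hxMB : x ∈ maxSet R B := (hMA ▸ hxMA).1
  have hxB : x ∈ B := hAB.subset hxA
  -- B \ {x} is nonempty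
  obtain ⟨b0, hb0B, hb0A⟩ := exists_of_ssubset hAB
  have hb0x : b0 ≠ x := fun h => hb0A (h ▸ hxA)
  have hBx : (B \ {x}).Nonempty := ⟨b0, hb0B, hb0x⟩
  have hnsB : ¬ ∃ a, B = {a} := by
    rintro ⟨a, rfl⟩
    exact hb0x ((mem_singleton_iff.1 hb0B).trans (mem_singleton_iff.1 hxB).symm)
  refine ⟨hxB, Or.inr ?_⟩
  obtain ⟨h1, h2⟩ := hrep.2.2 hB
  by_cases hs : ∃ a, maxSet R B = {a}
  · -- c B = maxSet R B ∋ x, but x ∉ c (B \ {x})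
    have hce : c B = maxSet R B := h1 hs
    intro heq
    have hx1 : x ∈ c (B \ {x}) := by rw [heq, hce]; exact hxMB
    exact ((hc hBx).2 hx1).2 rfl
  obtain ⟨m, hm, he⟩ := h2 hs
  by_cases hxm : x = m
  · -- x is the L-minimum of maxSet R B
    subst hxm
    -- maxSet R B \ {x} must not be a singleton; otherwise contradiction with x ∈ rC c A
    obtain ⟨a, haMB, hax⟩ := exists_second ⟨x, hm.1⟩ hs hm.1
    have hMBx : maxSet R (B \ {x}) = maxSet R B \ {x} := by
      rw [maxSet_inter hR diff_subset haMB ⟨maxSet_subset haMB, hax⟩]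
      ext z
      constructor
      · rintro ⟨hz, _, hzx⟩; exact ⟨hz, hzx⟩
      · rintro ⟨hz, hzx⟩; exact ⟨hz, maxSet_subset hz, hzx⟩
    by_cases h2s : ∃ a, maxSet R B \ {x} = {a}
    · -- the doubleton case: derive contradiction with x ∈ rC c A
      exfalso
      obtain ⟨a', ha'⟩ := h2s
      have haa : a = a' := by rw [← mem_singleton_iff, ← ha']; exact ⟨haMB, hax⟩
      subst haa
      have hMBpair : maxSet R B = {x, a} := by
        ext z
        constructor
        · intro hz
          rcases eq_or_ne z x with rfl | hzx
          · exact Or.inl rfl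
          · exact Or.inr (by rw [← ha']; exact ⟨hz, hzx⟩)
        · rintro (rfl | rfl)
          exacts [hm.1, haMB]
      -- y must be in maxSet B = {x, a}; show y ∈ rC c B forces y = a, then A's analysis
      -- maxSet of A contains x; a ∈ A?
      -- First: c B = maxSet R B \ {x} = {a}
      have hceB : c B = {a} := by rw [he, ← ha']
      -- c (B \ {y'}) for y' = y : we know y ∈ rC c B i.e. c(B\{y}) ≠ c B (B not singleton)
      have hyne : c (B \ {y}) ≠ c B := by
        rcases hyrB.2 with hh | hh
        · exact absurd hh hnsB
        · exact hh
      -- y ∈ {x, a}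
      have hyMB' : y ∈ ({x, a} : Set X) := hMBpair ▸ hyMB
      -- if y = x : c (B \ {x}) = {a} = c B, contradiction
      have hcBx : c (B \ {x}) = {a} := by
        obtain ⟨g1, g2⟩ := hrep.2.2 hBx
        rw [g1 (by rw [hMBx]; exact ⟨a, ha'⟩), hMBx, ← ha']
      rcases hyMB' with rfl | hya
      · exact hyne (hcBx.trans hceB.symm)
      · -- y = a; then x, a ∈ A, maxSet R A = {x, a}, c A = {a}, c (A\{x}) = {a} = c A,
        -- contradicting x ∈ rC c A
        rw [mem_singleton_iff] at hya
        have haA : a ∈ A := hya ▸ hyA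
        have hMAeq : maxSet R A = {x, a} := by
          rw [hMA, hMBpair]
          apply Subset.antisymm inter_subset_left
          rintro z (rfl | rfl)
          exacts [⟨Or.inl rfl, hxA⟩, ⟨Or.inr rfl, haA⟩]
        have hminA : IsMinOf L (maxSet R A) x := by
          refine ⟨hMAeq ▸ Or.inl rfl, ?_⟩
          intro z hz
          exact hm.2 z (hMA ▸ hz).1
        have hnsA : ¬ ∃ b, maxSet R A = {b} := by
          rintro ⟨b, hb⟩
          rw [hMAeq] at hb
          have h1' : x = b := by rw [← mem_singleton_iff, ← hb]; exact Or.inl rfl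
          have h2' : a = b := by rw [← mem_singleton_iff, ← hb]; exact Or.inr rfl
          exact hax (h2'.trans h1'.symm)
        obtain ⟨g1, g2⟩ := hrep.2.2 hA
        obtain ⟨mA, hmA, heA⟩ := g2 hnsA
        have hmAx : mA = x := min_unique hL hmA hminA
        subst hmAx
        have hcA : c A = {a} := by
          rw [heA, hMAeq]
          ext z
          constructor
          · rintro ⟨(rfl | rfl), hz⟩
            · exact absurd rfl hz
            · exact rfl
          · rintro rfl
            exact ⟨Or.inr rfl, hax⟩
        -- now compute c (A \ {mA})
        have haxA : a ∈ A \ {mA} := ⟨haA, hax⟩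
        have hAx : (A \ {mA}).Nonempty := ⟨a, haxA⟩
        have haMAx : a ∈ maxSet R (A \ {mA}) := by
          rw [maxSet_inter hR diff_subset (hMAeq ▸ (Or.inr rfl : a ∈ ({mA, a} : Set X))) haxA]
          exact ⟨hMAeq ▸ Or.inr rfl, haxA⟩
        have hMAx : maxSet R (A \ {mA}) = {a} := by
          rw [maxSet_inter hR diff_subset (hMAeq ▸ (Or.inr rfl : a ∈ ({mA, a} : Set X))) haxA,
            hMAeq]
          ext z
          constructor
          · rintro ⟨(rfl | rfl), hz, hzx⟩
            · exact absurd rfl hzx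
            · exact rfl
          · rintro rfl
            exact ⟨Or.inr rfl, haA, hax⟩
        obtain ⟨k1, _⟩ := hrep.2.2 hAx
        have : c (A \ {mA}) = c A := by rw [k1 ⟨a, hMAx⟩, hMAx, hcA]
        rcases hxrA.2 with hh | hh
        · exact (not_singleton_of_two hxA haA (fun h => hax h.symm)) hh
        · exact hh this
    · -- |maxSet R B| ≥ 3 : c(B \ {x}) = (maxSet B \ {x}) minus its min ≠ c B = maxSet B \ {x}
      obtain ⟨g1, g2⟩ := hrep.2.2 hBx
      obtain ⟨m', hm', he'⟩ := g2 (by rw [hMBx]; exact h2s)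
      rw [hMBx] at hm' he'
      intro heq
      -- m' ∈ c B but m' ∉ c (B \ {x})
      have hm'cB : m' ∈ c B := he ▸ hm'.1
      rw [← heq, he'] at hm'cB
      exact hm'cB.2 rfl
  · -- x ≠ m : x ∈ c B, and removing x changes the choice
    have hxcB : x ∈ c B := he ▸ ⟨hxMB, hxm⟩
    have hmBx : m ∈ B \ {x} := ⟨maxSet_subset hm.1, fun h => hxm (mem_singleton_iff.1 h).symm⟩
    have hMBx : maxSet R (B \ {x}) = maxSet R B \ {x} := by
      rw [maxSet_inter hR diff_subset hm.1 hmBx]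
      ext z
      constructor
      · rintro ⟨hz, _, hzx⟩; exact ⟨hz, hzx⟩
      · rintro ⟨hz, hzx⟩; exact ⟨hz, maxSet_subset hz, hzx⟩
    intro heq
    have hxc' : x ∉ c (B \ {x}) := fun h => ((hc hBx).2 h).2 rfl
    obtain ⟨g1, g2⟩ := hrep.2.2 hBx
    by_cases h2s : ∃ a, maxSet R (B \ {x}) = {a}
    · -- c (B\{x}) is the singleton {a}; a = m since m ∈ maxSet(B\{x}); but m ∉ c B
      obtain ⟨a, ha⟩ := h2s
      have hma : m = a := by
        rw [← mem_singleton_iff, ← ha, hMBx]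
        exact ⟨hm.1, fun h => hxm (mem_singleton_iff.1 h).symm⟩
      have : c (B \ {x}) = {a} := by rw [g1 ⟨a, ha⟩, ha]
      rw [heq, he] at this
      have : m ∈ maxSet R B \ {m} := by rw [this, hma]; exact rfl
      exact this.2 rfl
    · obtain ⟨m'', hm'', he''⟩ := g2 h2s
      rw [hMBx] at hm'' he''
      -- m is an L-min of maxSet B \ {x} as well; so m'' = m
      have hminx : IsMinOf L (maxSet R B \ {x}) m :=
        ⟨⟨hm.1, fun h => hxm (mem_singleton_iff.1 h).symm⟩, fun z hz => hm.2 z hz.1⟩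
      have hm''m : m'' = m := min_unique hL hm'' hminx
      subst hm''m
      -- x ∈ c B = maxSet B \ {m}; but x ∉ c (B\{x})
      have : x ∈ c (B \ {x}) := heq ▸ hxcB
      exact hxc' this

lemma cond3_of : Cond3 c := by
  rintro A ⟨x, y, hx, hy, hxy⟩
  have hA : A.Nonempty := ⟨x, hx⟩
  obtain ⟨h1, h2⟩ := hrep.2.2 hA
  by_cases hs : ∃ a, maxSet R A = {a}
  · obtain ⟨a, ha⟩ := hs
    have hce : c A = {a} := by rw [h1 ⟨a, ha⟩, ha]
    rcases eq_or_ne x a with rfl | hxa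
    · refine ⟨y, hy, fun hyc => ?_⟩
      rw [hce, mem_singleton_iff] at hyc
      exact hxy hyc.symm
    · refine ⟨x, hx, fun hxc => ?_⟩
      rw [hce, mem_singleton_iff] at hxc
      exact hxa hxc
  · obtain ⟨m, hm, he⟩ := h2 hs
    exact ⟨m, maxSet_subset hm.1, by rw [he]; exact fun h => h.2 rfl⟩

lemma cond4_of : Cond4 c := by
  intro A x y hA hxA hxcA hyA hxcB hycB
  have hB : (A ∪ {y}).Nonempty := hA.mono subset_union_left
  have hxMB : x ∈ maxSet R (A ∪ {y}) := c_subset_maxSet hrep hB hxcB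
  have hyMB : y ∈ maxSet R (A ∪ {y}) := c_subset_maxSet hrep hB hycB
  have hMA : maxSet R A = maxSet R (A ∪ {y}) ∩ A :=
    maxSet_inter hR subset_union_left hxMB hxA
  have hxMA : x ∈ maxSet R A := hMA ▸ ⟨hxMB, hxA⟩
  obtain ⟨g1, g2⟩ := hrep.2.2 hA
  by_cases hsA : ∃ a, maxSet R A = {a}
  · exact hxcA (g1 hsA ▸ hxMA)
  obtain ⟨mA, hmA, heA⟩ := g2 hsA
  have hxm : x = mA := by
    by_contra h
    exact hxcA (heA ▸ ⟨hxMA, h⟩)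
  subst hxm
  obtain ⟨h1, h2⟩ := hrep.2.2 hB
  by_cases hs : ∃ a, maxSet R (A ∪ {y}) = {a}
  · obtain ⟨a, ha⟩ := hs
    rw [ha, mem_singleton_iff] at hxMB hyMB
    exact hyA ((hyMB.trans hxMB.symm) ▸ hxA)
  obtain ⟨m', hm', he'⟩ := h2 hs
  rw [he'] at hxcB hycB
  have hm'A : m' ∈ A := by
    rcases hm'.1.1 with h | h
    · exact h
    · rw [mem_singleton_iff] at h
      exact absurd (mem_singleton_iff.2 h.symm : y ∈ ({m'} : Set X)) hycB.2
  have hm'MA : m' ∈ maxSet R A := hMA ▸ ⟨hm'.1, hm'A⟩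
  have hminA : IsMinOf L (maxSet R A) m' :=
    ⟨hm'MA, fun z hz => hm'.2 z (hMA ▸ hz).1⟩
  exact hxcB.2 (min_unique hL hmA hminA)

lemma cond5_of : Cond5 c := by
  rintro A B hA hBr ⟨u, v, hu, hv, huv⟩
  have hBA : B ⊆ A := hBr.trans (fun z hz => hz.1)
  have hBne : B.Nonempty := ⟨u, hu⟩
  have hBM : B ⊆ maxSet R A := hBr.trans (rC_subset_maxSet hR hL hrep hA)
  have hMB : maxSet R B = B := by
    apply Subset.antisymm maxSet_subset
    intro b hb
    exact ⟨hb, fun w hw => (hBM hb).2 w (hBA hw)⟩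
  obtain ⟨h1, h2⟩ := hrep.2.2 hBne
  have hns : ¬ ∃ a, maxSet R B = {a} := by
    rintro ⟨a, ha⟩
    rw [hMB] at ha
    exact huv ((ha ▸ hu : u ∈ ({a} : Set X)).trans (ha ▸ hv : v ∈ ({a} : Set X)).symm)
  obtain ⟨m, hm, he⟩ := h2 hns
  rw [hMB] at hm he
  refine ⟨m, by rw [he]; exact fun h => h.2 rfl, ?_⟩
  rw [he]
  exact (Set.diff_union_of_subset (singleton_subset_iff.2 hm.1)).symm

end Conds

/-! ### Sufficiency: constructing a representation from Conditions 1,2,3,5 -/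

section Suff

variable (c)

/-- revealed strict relation from pairs -/
def sucR (x y : X) : Prop := x ≠ y ∧ x ∈ c {x, y}

/-- revealed indifference: joint membership in some r^c(A) -/
def equR (x y : X) : Prop := x = y ∨ ∃ A : Set X, x ∈ rC c A ∧ y ∈ rC c A

variable {c}

lemma c_singleton (hc : ChoiceCorr c) (a : X) : c {a} = {a} := by
  obtain ⟨⟨w, hw⟩, hsub⟩ := hc (singleton_nonempty a)
  have : w = a := hsub hw
  subst this
  exact Subset.antisymm hsub (singleton_subset_iff.2 hw)

lemma pair_choice (hc : ChoiceCorr c) (h3 : Cond3 c) {x y : X} (h : x ≠ y) :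
    c {x, y} = {x} ∨ c {x, y} = {y} := by
  have hne : ({x, y} : Set X).Nonempty := ⟨x, Or.inl rfl⟩
  obtain ⟨hcne, hsub⟩ := hc hne
  obtain ⟨w, hw, hwc⟩ := h3 (A := {x, y}) ⟨x, y, Or.inl rfl, Or.inr rfl, h⟩
  rcases hw with rfl | hw
  · -- w = x not chosen, so c = {y}
    right
    apply Subset.antisymm
    · intro z hz
      rcases hsub hz with rfl | hz'
      · exact absurd hz hwc
      · exact hz'
    · obtain ⟨v, hv⟩ := hcne
      rcases hsub hv with rfl | hv'
      · exact absurd hv hwc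
      · rw [mem_singleton_iff] at hv'
        subst hv'
        exact singleton_subset_iff.2 hv
  · rw [mem_singleton_iff] at hw
    subst hw
    left
    apply Subset.antisymm
    · intro z hz
      rcases hsub hz with hz' | rfl
      · exact hz'
      · exact absurd hz hwc
    · obtain ⟨v, hv⟩ := hcne
      rcases hsub hv with rfl | hv'
      · exact singleton_subset_iff.2 hv
      · rw [mem_singleton_iff] at hv'
        subst hv'
        exact absurd hv hwc

lemma sucR_total (hc : ChoiceCorr c) (h3 : Cond3 c) {x y : X} (h : x ≠ y) :
    sucR c x y ∨ sucR c y x := by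
  rcases pair_choice hc h3 h with he | he
  · exact Or.inl ⟨h, he ▸ rfl⟩
  · refine Or.inr ⟨h.symm, ?_⟩
    rw [pair_comm y x, he]
    exact rfl

lemma sucR_asymm (hc : ChoiceCorr c) (h3 : Cond3 c) {x y : X}
    (h : sucR c x y) : ¬ sucR c y x := by
  rintro ⟨hyx, hy⟩
  rw [pair_comm y x] at hy
  rcases pair_choice hc h3 h.1 with he | he
  · rw [he, mem_singleton_iff] at hy
    exact hyx hy
  · have := h.2
    rw [he, mem_singleton_iff] at this
    exact h.1 this

lemma rC_sub {A : Set X} : rC c A ⊆ A := fun _ hx => hx.1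

lemma exists_ne_of_not_sing {A : Set X} {x : X} (hx : x ∈ A) (hns : ¬ ∃ a, A = {a}) :
    ∃ b ∈ A, b ≠ x := by
  by_contra h
  push_neg at h
  exact hns ⟨x, Subset.antisymm h (singleton_subset_iff.2 hx)⟩

lemma c_sub_rC (hc : ChoiceCorr c) {A : Set X} (hA : A.Nonempty) : c A ⊆ rC c A := by
  intro x hx
  have hxA : x ∈ A := (hc hA).2 hx
  refine ⟨hxA, ?_⟩
  by_cases hs : ∃ a, A = {a}
  · exact Or.inl hs
  · refine Or.inr fun heq => ?_
    obtain ⟨b, hb, hbx⟩ := exists_ne_of_not_sing hxA hs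
    have hAx : (A \ {x}).Nonempty := ⟨b, hb, hbx⟩
    have : x ∈ c (A \ {x}) := heq.symm ▸ hx
    exact ((hc hAx).2 this).2 rfl

lemma rC_nonempty (hc : ChoiceCorr c) {A : Set X} (hA : A.Nonempty) : (rC c A).Nonempty :=
  ((hc hA).1).mono (c_sub_rC hc hA)

/-- every chosen element beats every unchosen element -/
lemma dom_c (hc : ChoiceCorr c) (h1 : Cond1 c) (h3 : Cond3 c) {A : Set X} {x y : X}
    (hxA : x ∈ A) (hxc : x ∉ c A) (hyc : y ∈ c A) : sucR c y x := by
  have hA : A.Nonempty := ⟨x, hxA⟩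
  have hyA : y ∈ A := (hc hA).2 hyc
  have hxy : x ≠ y := fun h => hxc (h ▸ hyc)
  rcases sucR_total hc h3 hxy with hs | hs
  · exfalso
    by_cases hp : ({x, y} : Set X) = A
    · exact hxc (hp ▸ hs.2)
    · have hsub : ({x, y} : Set X) ⊆ A := by
        rintro z (rfl | rfl)
        exacts [hxA, hyA]
      exact hxc (h1 ⟨x, Or.inl rfl⟩ (hsub.ssubset_of_ne hp)
        (show x ∈ ({x, y} : Set X) from Or.inl rfl)
        (show y ∈ ({x, y} : Set X) from Or.inr rfl) hs.2 hyc)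
  · exact hs

lemma pair_rC_aux (hc : ChoiceCorr c) {x y : X} (h : x ≠ y) (he : c {x, y} = {x}) :
    rC c {x, y} = {x} := by
  have hns : ¬ ∃ a, ({x, y} : Set X) = {a} :=
    not_singleton_of_two (Or.inl rfl) (Or.inr rfl) h
  apply Subset.antisymm
  · rintro z ⟨hz, hz2⟩
    rcases hz2 with hs | hne
    · exact absurd hs hns
    · rcases hz with rfl | hz1
      · exact rfl
      · rw [mem_singleton_iff] at hz1
        subst hz1
        exfalso
        apply hne
        rw [Set.pair_diff_right h, c_singleton hc, he]
  · rintro z rfl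
    refine ⟨Or.inl rfl, Or.inr ?_⟩
    rw [Set.pair_diff_left h, c_singleton hc, he]
    intro hyx
    exact h ((singleton_eq_singleton_iff.1 hyx)).symm

lemma pair_rC (hc : ChoiceCorr c) (h3 : Cond3 c) {x y : X} (h : x ≠ y) :
    rC c {x, y} = c {x, y} := by
  rcases pair_choice hc h3 h with he | he
  · rw [he]; exact pair_rC_aux hc h he
  · rw [he]
    rw [pair_comm x y] at he ⊢
    exact pair_rC_aux hc h.symm he

/-- every r-element beats every non-r element -/
lemma dom_r (hc : ChoiceCorr c) (h2 : Cond2 c) (h3 : Cond3 c) {A : Set X} {x y : X}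
    (hxA : x ∈ A) (hxr : x ∉ rC c A) (hyr : y ∈ rC c A) : sucR c y x := by
  have hyA : y ∈ A := rC_sub hyr
  have hxy : x ≠ y := fun h => hxr (h ▸ hyr)
  rcases sucR_total hc h3 hxy with hs | hs
  · exfalso
    have hxp : x ∈ rC c {x, y} := by
      rw [pair_rC hc h3 hxy]
      exact hs.2
    by_cases hp : ({x, y} : Set X) = A
    · exact hxr (hp ▸ hxp)
    · have hsub : ({x, y} : Set X) ⊆ A := by
        rintro z (rfl | rfl)
        exacts [hxA, hyA]
      exact hxr (h2 ⟨x, Or.inl rfl⟩ (hsub.ssubset_of_ne hp)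
        (show x ∈ ({x, y} : Set X) from Or.inl rfl)
        (show y ∈ ({x, y} : Set X) from Or.inr rfl) hxp hyr)
  · exact hs

/-- contraction for c -/
lemma contr_c (hc : ChoiceCorr c) (h1 : Cond1 c) {A B : Set X} (hBA : B ⊆ A)
    (hBne : B.Nonempty) {y : X} (hyc : y ∈ c A) (hyB : y ∈ B) : c B ⊆ c A := by
  by_cases heq : B = A
  · subst heq; exact Subset.rfl
  · intro x hx
    exact h1 hBne (hBA.ssubset_of_ne heq) ((hc hBne).2 hx) hyB hx hyc

/-- expansion for rC -/
lemma exp_r (h2 : Cond2 c) {A C : Set X} (hAC : A ⊆ C) (hAne : A.Nonempty) {y : X}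
    (hyr : y ∈ rC c C) (hyA : y ∈ A) : rC c A ⊆ rC c C := by
  by_cases heq : A = C
  · subst heq; exact Subset.rfl
  · intro x hx
    exact h2 hAne (hAC.ssubset_of_ne heq) (rC_sub hx) hyA hx hyr

/-- joint expansion into a union -/
lemma union_r (hc : ChoiceCorr c) (h2 : Cond2 c) {A B : Set X} {y : X}
    (hyA : y ∈ rC c A) (hyB : y ∈ rC c B) : rC c A ∪ rC c B ⊆ rC c (A ∪ B) := by
  have hA : A.Nonempty := ⟨y, rC_sub hyA⟩
  have hB : B.Nonempty := ⟨y, rC_sub hyB⟩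
  have hAB : (A ∪ B).Nonempty := hA.mono subset_union_left
  obtain ⟨z, hz⟩ := rC_nonempty hc hAB
  have hsub : ∀ w ∈ rC c (A ∪ B), (rC c A ∪ rC c B) ⊆ rC c (A ∪ B) → True := fun _ _ _ => trivial
  rcases rC_sub hz with hzA | hzB
  · have hrA : rC c A ⊆ rC c (A ∪ B) := exp_r h2 subset_union_left hA hz hzA
    have hrB : rC c B ⊆ rC c (A ∪ B) :=
      exp_r h2 subset_union_right hB (hrA hyA) (rC_sub hyB)
    exact union_subset hrA hrB
  · have hrB : rC c B ⊆ rC c (A ∪ B) := exp_r h2 subset_union_right hB hz hzB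
    have hrA : rC c A ⊆ rC c (A ∪ B) :=
      exp_r h2 subset_union_left hA (hrB hyB) (rC_sub hyA)
    exact union_subset hrA hrB

/-- no 3-cycles in the revealed pair relation -/
lemma no_cycle_aux (hc : ChoiceCorr c) (h1 : Cond1 c) (h3 : Cond3 c) {x y z : X}
    (hxy : sucR c x y) (hyz : sucR c y z) (hzx : sucR c z x)
    (hx : x ∉ c {x, y, z}) : False := by
  have hT : ({x, y, z} : Set X).Nonempty := ⟨x, Or.inl rfl⟩
  obtain ⟨v, hv⟩ := (hc hT).1
  have hvT : v ∈ ({x, y, z} : Set X) := (hc hT).2 hv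
  have hxT : x ∈ ({x, y, z} : Set X) := Or.inl rfl
  have hyT : y ∈ ({x, y, z} : Set X) := Or.inr (Or.inl rfl)
  rcases hvT with rfl | hvT'
  · exact hx hv
  rcases hvT' with rfl | hvT''
  · -- y chosen, x unchosen: y ≻ x contradicts x ≻ y
    exact sucR_asymm hc h3 hxy (dom_c hc h1 h3 hxT hx hv)
  rw [mem_singleton_iff] at hvT''
  subst hvT''
  -- v = z chosen; case on whether y is chosen
  by_cases hy : y ∈ c {x, y, v}
  · exact sucR_asymm hc h3 hxy (dom_c hc h1 h3 hxT hx hy)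
  · exact sucR_asymm hc h3 hyz (dom_c hc h1 h3 hyT hy hv)

lemma no_cycle (hc : ChoiceCorr c) (h1 : Cond1 c) (h3 : Cond3 c) {x y z : X}
    (hxy : sucR c x y) (hyz : sucR c y z) (hzx : sucR c z x) : False := by
  have hxyne := hxy.1
  have hyzne := hyz.1
  have hzxne := hzx.1
  obtain ⟨w, hwT, hw⟩ := h3 (A := {x, y, z}) ⟨x, y, Or.inl rfl, Or.inr (Or.inl rfl), hxyne⟩
  rcases hwT with rfl | rfl | rfl
  · exact no_cycle_aux hc h1 h3 hxy hyz hzx hw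
  · have hset : ({w, z, x} : Set X) = {x, w, z} := by
      ext u; constructor
      · rintro (rfl | rfl | rfl)
        exacts [Or.inr (Or.inl rfl), Or.inr (Or.inr rfl), Or.inl rfl]
      · rintro (rfl | rfl | rfl)
        exacts [Or.inr (Or.inr rfl), Or.inl rfl, Or.inr (Or.inl rfl)]
    exact no_cycle_aux hc h1 h3 hyz hzx hxy (by rw [hset]; exact hw)
  · have hset : ({w, x, y} : Set X) = {x, y, w} := by
      ext u; constructor
      · rintro (rfl | rfl | rfl)
        exacts [Or.inr (Or.inr rfl), Or.inl rfl, Or.inr (Or.inl rfl)]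
      · rintro (rfl | rfl | rfl)
        exacts [Or.inr (Or.inl rfl), Or.inr (Or.inr rfl), Or.inl rfl]
    exact no_cycle_aux hc h1 h3 hzx hxy hyz (by rw [hset]; exact hw)

lemma sucR_trans (hc : ChoiceCorr c) (h1 : Cond1 c) (h3 : Cond3 c) {x y z : X}
    (hxy : sucR c x y) (hyz : sucR c y z) : sucR c x z := by
  by_cases hxz : x = z
  · subst hxz
    exact absurd hyz (sucR_asymm hc h3 hxy)
  rcases sucR_total hc h3 hxz with h | h
  · exact h
  · exact absurd h (fun h => no_cycle hc h1 h3 hxy hyz h)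

lemma equR_refl (x : X) : equR c x x := Or.inl rfl

lemma equR_symm {x y : X} (h : equR c x y) : equR c y x := by
  rcases h with rfl | ⟨A, hA⟩
  · exact Or.inl rfl
  · exact Or.inr ⟨A, hA.2, hA.1⟩

lemma equR_trans (hc : ChoiceCorr c) (h2 : Cond2 c) {x y z : X}
    (hxy : equR c x y) (hyz : equR c y z) : equR c x z := by
  rcases hxy with rfl | ⟨A, hxA, hyA⟩
  · exact hyz
  rcases hyz with rfl | ⟨B, hyB, hzB⟩
  · exact Or.inr ⟨A, hxA, hyA⟩
  refine Or.inr ⟨A ∪ B, ?_, ?_⟩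
  · exact union_r hc h2 hyA hyB (Or.inl hxA)
  · exact union_r hc h2 hyA hyB (Or.inr hzB)

/-- congruence: elements of one revealed-indifference witness behave alike vs outsiders -/
lemma congr_r (hc : ChoiceCorr c) (h2 : Cond2 c) (h3 : Cond3 c) {x y z : X}
    (hxy : equR c x y) (hne : x ≠ y) (hxz : ¬ equR c x z) (hs : sucR c x z) :
    sucR c y z := by
  obtain ⟨A, hxA, hyA⟩ := hxy.resolve_left hne
  have hA : A.Nonempty := ⟨x, rC_sub hxA⟩
  have hC : (insert z A).Nonempty := hA.mono (subset_insert _ _)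
  obtain ⟨w, hw⟩ := rC_nonempty hc hC
  rcases rC_sub hw with rfl | hwA
  · -- w = z ∈ rC (insert z A); then x ∉ rC, so z ≻ x, contradiction
    have hxC : x ∈ insert w A := mem_insert_of_mem _ (rC_sub hxA)
    by_cases hxr : x ∈ rC c (insert w A)
    · exact absurd (Or.inr ⟨insert w A, hxr, hw⟩) hxz
    · exact absurd (dom_r hc h2 h3 hxC hxr hw) (sucR_asymm hc h3 hs)
  · have hrA : rC c A ⊆ rC c (insert z A) := exp_r h2 (subset_insert _ _) hA hw hwA
    have hzr : z ∉ rC c (insert z A) := fun hzr => hxz (Or.inr ⟨insert z A, hrA hxA, hzr⟩)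
    exact dom_r hc h2 h3 (mem_insert _ _) hzr (hrA hyA)

/-- K1: if c A has two elements then some removable element is unchosen -/
lemma K1 [Finite X] (hc : ChoiceCorr c) (h2 : Cond2 c) (h3 : Cond3 c) :
    ∀ n (A : Set X), A.ncard = n → A.Nonempty →
      (∃ x ∈ c A, ∃ y ∈ c A, x ≠ y) → c A = rC c A → False := by
  intro n
  induction n using Nat.strong_induction_on with
  | _ n ih =>
    rintro A hcard hA ⟨x, hx, y, hy, hxy⟩ hr
    have hsub : c A ⊆ A := (hc hA).2
    have hns : ¬ ∃ a, A = {a} := not_singleton_of_two (hsub hx) (hsub hy) hxy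
    obtain ⟨w, hwA, hwc⟩ := h3 ⟨x, y, hsub hx, hsub hy, hxy⟩
    have hwr : w ∉ rC c A := hr ▸ hwc
    have heq : c (A \ {w}) = c A := by
      by_contra hne
      exact hwr ⟨hwA, Or.inr hne⟩
    have hxw : x ≠ w := fun h => hwc (h ▸ hx)
    have hA' : (A \ {w}).Nonempty := ⟨x, hsub hx, hxw⟩
    have hcard' : (A \ {w}).ncard < n := hcard ▸ Set.ncard_diff_singleton_lt_of_mem hwA (Set.toFinite A)
    have h2' : ∃ x' ∈ c (A \ {w}), ∃ y' ∈ c (A \ {w}), x' ≠ y' :=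
      ⟨x, heq.symm ▸ hx, y, heq.symm ▸ hy, hxy⟩
    have hne' : c (A \ {w}) ≠ rC c (A \ {w}) := fun h =>
      ih _ hcard' (A \ {w}) rfl hA' h2' h
    have hcr' : c (A \ {w}) ⊆ rC c (A \ {w}) := c_sub_rC hc hA'
    have : ¬ rC c (A \ {w}) ⊆ c (A \ {w}) := fun h => hne' (Subset.antisymm hcr' h)
    obtain ⟨m, hm, hmc⟩ := not_subset.1 this
    -- push m up into rC c A using Cond2 with witness x ∈ rC c A ∩ (A \ {w})
    have hxr : x ∈ rC c A := hr ▸ hx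
    have hxA' : x ∈ A \ {w} := ⟨hsub hx, hxw⟩
    have hss : A \ {w} ⊂ A := Set.sdiff_singleton_ssubset.2 hwA
    have hmr : m ∈ rC c A := h2 hA' hss (rC_sub hm) hxA' hm hxr
    rw [← hr] at hmr
    rw [heq] at hmc
    exact hmc hmr

/-- c A is a singleton whenever c A = rC c A -/
lemma c_singleton_of_eq_r [Finite X] (hc : ChoiceCorr c) (h2 : Cond2 c) (h3 : Cond3 c)
    {A : Set X} (hA : A.Nonempty) (hr : c A = rC c A) : ∃ a, c A = {a} := by
  obtain ⟨a, ha⟩ := (hc hA).1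
  refine ⟨a, Subset.antisymm ?_ (singleton_subset_iff.2 ha)⟩
  intro z hz
  rw [mem_singleton_iff]
  by_contra hza
  exact K1 hc h2 h3 A.ncard A rfl hA ⟨z, hz, a, ha, hza⟩ hr

/-- K2: at most one element of rC c A is unchosen -/
lemma K2 (hc : ChoiceCorr c) (h1 : Cond1 c) (h3 : Cond3 c) (h5 : Cond5 c)
    {A : Set X} {m₁ m₂ : X} (hm₁ : m₁ ∈ rC c A) (hm₁c : m₁ ∉ c A)
    (hm₂ : m₂ ∈ rC c A) (hm₂c : m₂ ∉ c A) : m₁ = m₂ := by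
  by_contra hne
  have hA : A.Nonempty := ⟨m₁, rC_sub hm₁⟩
  have hcr : c A ⊆ rC c A := c_sub_rC hc hA
  obtain ⟨a₀, ha₀⟩ := (hc hA).1
  have ha₀m₁ : a₀ ≠ m₁ := fun h => hm₁c (h ▸ ha₀)
  have ha₀m₂ : a₀ ≠ m₂ := fun h => hm₂c (h ▸ ha₀)
  by_cases hBA : c A ∪ {m₁, m₂} = A
  · -- A = c A ∪ {m₁, m₂}
    set A₁ := A \ {m₂} with hA₁def
    have hm₂A : m₂ ∈ A := rC_sub hm₂
    have hA₁sub : A₁ ⊆ rC c A := by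
      intro z hz
      have hzA : z ∈ A := hz.1
      rw [← hBA] at hzA
      rcases hzA with hzc | hz2
      · exact hcr hzc
      · rcases hz2 with rfl | hz3
        · exact hm₁
        · exact absurd hz3 hz.2
    have ha₀A₁ : a₀ ∈ A₁ := ⟨(hc hA).2 ha₀, fun h => ha₀m₂ (mem_singleton_iff.1 h)⟩
    have hm₁A₁ : m₁ ∈ A₁ := ⟨rC_sub hm₁, fun h => hne (mem_singleton_iff.1 h)⟩
    have hA₁ne : A₁.Nonempty := ⟨a₀, ha₀A₁⟩
    obtain ⟨yy, hyyc, hA₁eq⟩ := h5 hA hA₁sub ⟨a₀, m₁, ha₀A₁, hm₁A₁, ha₀m₁⟩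
    have hyyA₁ : yy ∈ A₁ := by rw [hA₁eq]; exact Or.inr rfl
    have hcA₁ : c A₁ = A₁ \ {yy} := by
      apply Subset.antisymm
      · intro z hz
        exact ⟨(hc hA₁ne).2 hz, fun h => hyyc ((mem_singleton_iff.1 h) ▸ hz)⟩
      · rintro z ⟨hz1, hz2⟩
        rw [hA₁eq] at hz1
        rcases hz1 with h | h
        · exact h
        · exact absurd h hz2
    have hcA₁sub : c A₁ ⊆ c A :=
      contr_c hc h1 diff_subset hA₁ne ha₀ ha₀A₁
    -- yy cannot be in c A (else m₁ ∈ c A₁ ⊆ c A)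
    have hyym₁ : yy = m₁ := by
      by_contra hyym₁
      have : m₁ ∈ c A₁ := hcA₁ ▸ ⟨hm₁A₁, fun h => hyym₁ (mem_singleton_iff.1 h).symm⟩
      exact hm₁c (hcA₁sub this)
    subst hyym₁
    -- c A₁ = c A, contradicting m₂ ∈ rC c A
    have hceq : c A₁ = c A := by
      apply Subset.antisymm hcA₁sub
      intro z hz
      have hzA : z ∈ A := (hc hA).2 hz
      have hzm₂ : z ≠ m₂ := fun h => hm₂c (h ▸ hz)
      have hzm₁ : z ≠ yy := fun h => hm₁c (h ▸ hz)
      rw [hcA₁]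
      exact ⟨⟨hzA, fun h => hzm₂ (mem_singleton_iff.1 h)⟩, fun h => hzm₁ (mem_singleton_iff.1 h)⟩
    rcases hm₂.2 with hs | hne'
    · exact not_singleton_of_two (rC_sub hm₁) (rC_sub hm₂) hne hs
    · exact hne' hceq
  · -- the easy case: B := c A ∪ {m₁, m₂} ⊊ A
    set B := c A ∪ {m₁, m₂} with hBdef
    have hBsub : B ⊆ rC c A := by
      rintro z (hz | hz)
      · exact hcr hz
      · rcases hz with rfl | hz'
        · exact hm₁
        · exact (mem_singleton_iff.1 hz') ▸ hm₂
    have hBsubA : B ⊆ A := hBsub.trans rC_sub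
    have ha₀B : a₀ ∈ B := Or.inl ha₀
    have hm₁B : m₁ ∈ B := Or.inr (Or.inl rfl)
    have hm₂B : m₂ ∈ B := Or.inr (Or.inr rfl)
    have hBne : B.Nonempty := ⟨a₀, ha₀B⟩
    obtain ⟨xx, hxxc, hBeq⟩ := h5 hA hBsub ⟨a₀, m₁, ha₀B, hm₁B, ha₀m₁⟩
    have hcB : c B ⊆ c A := contr_c hc h1 hBsubA hBne ha₀ ha₀B
    -- one of m₁, m₂ differs from xx and lies in c B ⊆ c A: contradiction
    rcases eq_or_ne m₁ xx with rfl | hm₁x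
    · have : m₂ ∈ c B := by
        rw [hBeq] at hm₂B
        rcases hm₂B with h | h
        · exact h
        · exact absurd (mem_singleton_iff.1 h) (Ne.symm hne)
      exact hm₂c (hcB this)
    · have : m₁ ∈ c B := by
        rw [hBeq] at hm₁B
        rcases hm₁B with h | h
        · exact h
        · exact absurd (mem_singleton_iff.1 h) hm₁x
      exact hm₁c (hcB this)

variable (c)

/-- the constructed weak order -/
def Rr : X → X → Prop := fun a b => equR c a b ∨ sucR c a b

/-- the constructed linear order -/
def Lr : X → X → Prop := fun a b => a = b ∨ sucR c a b

variable {c}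

lemma weakOrd_Rr (hc : ChoiceCorr c) (h1 : Cond1 c) (h2 : Cond2 c) (h3 : Cond3 c) :
    WeakOrd (Rr c) := by
  constructor
  · intro a b
    rcases eq_or_ne a b with rfl | hab
    · exact Or.inl (Or.inl (equR_refl a))
    · rcases sucR_total hc h3 hab with h | h
      · exact Or.inl (Or.inr h)
      · exact Or.inr (Or.inr h)
  · rintro a b d (hab | hab) (hbd | hbd)
    · exact Or.inl (equR_trans hc h2 hab hbd)
    · -- equR a b, sucR b d
      rcases eq_or_ne a b with rfl | habne
      · exact Or.inr hbd
      by_cases hbd' : equR c b d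
      · exact Or.inl (equR_trans hc h2 hab hbd')
      by_cases had : equR c a d
      · exact Or.inl had
      · exact Or.inr (congr_r hc h2 h3 (equR_symm hab) (Ne.symm habne) hbd' hbd)
    · -- sucR a b, equR b d
      rcases eq_or_ne b d with rfl | hbdne
      · exact Or.inr hab
      by_cases hab' : equR c a b
      · exact Or.inl (equR_trans hc h2 hab' hbd)
      by_cases had : equR c a d
      · exact Or.inl had
      · -- suppose sucR d a; then congruence transfers it to b, contradiction
        refine Or.inr ?_
        rcases eq_or_ne a d with rfl | hadne
        · exact absurd (equR_refl a) had
        rcases sucR_total hc h3 hadne with h | h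
        · exact h
        · exfalso
          have hda : ¬ equR c d a := fun hh => had (equR_symm hh)
          have : sucR c b a := congr_r hc h2 h3 (equR_symm hbd) (Ne.symm hbdne) hda h
          exact sucR_asymm hc h3 hab this
    · exact Or.inr (sucR_trans hc h1 h3 hab hbd)

lemma linOrd_Lr (hc : ChoiceCorr c) (h1 : Cond1 c) (h3 : Cond3 c) : LinOrdRel (Lr c) := by
  refine ⟨⟨?_, ?_⟩, ?_⟩
  · intro a b
    rcases eq_or_ne a b with rfl | hab
    · exact Or.inl (Or.inl rfl)
    · rcases sucR_total hc h3 hab with h | h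
      · exact Or.inl (Or.inr h)
      · exact Or.inr (Or.inr h)
  · rintro a b d (rfl | hab) (hbd | hbd)
    · exact Or.inl hbd
    · exact Or.inr hbd
    · exact Or.inr (hbd ▸ hab)
    · exact Or.inr (sucR_trans hc h1 h3 hab hbd)
  · rintro a b (rfl | hab) (hba | hba)
    · rfl
    · rfl
    · exact hba.symm
    · exact absurd hba (sucR_asymm hc h3 hab)

/-- the key structural lemma: the representation holds menu by menu -/
lemma rep_of_conds [Finite X] (hc : ChoiceCorr c) (h1 : Cond1 c) (h2 : Cond2 c)
    (h3 : Cond3 c) (h5 : Cond5 c) {A : Set X} (hA : A.Nonempty) :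
    ((∃ a, maxSet (Rr c) A = {a}) → c A = maxSet (Rr c) A) ∧
    (¬ (∃ a, maxSet (Rr c) A = {a}) →
      ∃ m, IsMinOf (Lr c) (maxSet (Rr c) A) m ∧ c A = maxSet (Rr c) A \ {m}) := by
  have hcr : c A ⊆ rC c A := c_sub_rC hc hA
  -- rC c A ⊆ maxSet
  have hrM : rC c A ⊆ maxSet (Rr c) A := by
    intro x hx
    refine ⟨rC_sub hx, fun w hw => ?_⟩
    by_cases hwr : w ∈ rC c A
    · exact Or.inl (Or.inr ⟨A, hx, hwr⟩)
    · exact Or.inr (dom_r hc h2 h3 hw hwr hx)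
  by_cases hex : ∃ x ∈ maxSet (Rr c) A, x ∉ rC c A
  · -- Case 1: an outside element ties into the top
    obtain ⟨x₀, hx₀M, hx₀r⟩ := hex
    obtain ⟨y₀, hy₀⟩ := rC_nonempty hc hA
    have hsuc : sucR c y₀ x₀ := dom_r hc h2 h3 hx₀M.1 hx₀r hy₀
    have hx₀y₀ : x₀ ≠ y₀ := fun h => hx₀r (h ▸ hy₀)
    have hequ : equR c x₀ y₀ := by
      rcases hx₀M.2 y₀ (rC_sub hy₀) with h | h
      · exact h
      · exact absurd h (sucR_asymm hc h3 hsuc)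
    -- K6: rC c A = c A and both are the singleton {a₀}
    obtain ⟨B, hx₀B, hy₀B⟩ := hequ.resolve_left hx₀y₀
    have hBne : B.Nonempty := ⟨x₀, rC_sub hx₀B⟩
    have hU : rC c A ∪ rC c B ⊆ rC c (A ∪ B) := union_r hc h2 hy₀ hy₀B
    have hABne : (A ∪ B).Nonempty := hA.mono subset_union_left
    set B' : Set X := rC c A ∪ {x₀} with hB'def
    have hB'sub : B' ⊆ rC c (A ∪ B) := by
      rintro z (hz | hz)
      · exact hU (Or.inl hz)
      · exact (mem_singleton_iff.1 hz) ▸ hU (Or.inr hx₀B)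
    have hB'A : B' ⊆ A := by
      rintro z (hz | hz)
      · exact rC_sub hz
      · exact (mem_singleton_iff.1 hz) ▸ hx₀M.1
    obtain ⟨xx, hxxc, hB'eq⟩ := h5 hABne hB'sub
      ⟨y₀, x₀, Or.inl hy₀, Or.inr rfl, Ne.symm hx₀y₀⟩
    have hB'ne : B'.Nonempty := ⟨x₀, Or.inr rfl⟩
    obtain ⟨a₀, ha₀⟩ := (hc hA).1
    have ha₀B' : a₀ ∈ B' := Or.inl (hcr ha₀)
    have hcB' : c B' ⊆ c A := contr_c hc h1 hB'A hB'ne ha₀ ha₀B'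
    have hxxr : xx ∉ rC c A := by
      intro hxxr
      have hx₀B' : x₀ ∈ B' := Or.inr rfl
      have : x₀ ∈ c B' := by
        rw [hB'eq] at hx₀B'
        rcases hx₀B' with h | h
        · exact h
        · exact absurd ((mem_singleton_iff.1 h) ▸ hxxr) hx₀r
      exact hx₀r (hcr (hcB' this))
    have hrc : rC c A ⊆ c A := by
      intro u hu
      have huB' : u ∈ B' := Or.inl hu
      rw [hB'eq] at huB'
      rcases huB' with h | h
      · exact hcB' h
      · exact absurd ((mem_singleton_iff.1 h) ▸ hu) hxxr
    have hceq : c A = rC c A := Subset.antisymm hcr hrc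
    obtain ⟨a, hca⟩ := c_singleton_of_eq_r hc h2 h3 hA hceq
    have hra : rC c A = {a} := hceq ▸ hca
    have hy₀a : y₀ = a := by rw [← mem_singleton_iff, ← hra]; exact hy₀
    subst hy₀a
    -- uniqueness of the tying element
    have huniq : ∀ x₁ ∈ maxSet (Rr c) A, x₁ ≠ y₀ → x₁ = x₀ := by
      intro x₁ hx₁M hx₁a
      by_contra hx₁₀
      have hx₁r : x₁ ∉ rC c A := by rw [hra]; exact fun h => hx₁a (mem_singleton_iff.1 h)
      have hequ₁ : equR c x₁ y₀ := by
        rcases hx₁M.2 y₀ (rC_sub hy₀) with h | h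
        · exact h
        · exact absurd h (sucR_asymm hc h3 (dom_r hc h2 h3 hx₁M.1 hx₁r hy₀))
      obtain ⟨B₁, hx₁B₁, hy₀B₁⟩ := hequ₁.resolve_left (fun h => hx₁a h)
      -- build a common witness containing y₀, x₁, x₀
      have hU₁ : rC c A ∪ rC c B₁ ⊆ rC c (A ∪ B₁) := union_r hc h2 hy₀ hy₀B₁
      have hy₀D₁ : y₀ ∈ rC c (A ∪ B₁) := hU₁ (Or.inl hy₀)
      have hU₂ : rC c (A ∪ B₁) ∪ rC c B ⊆ rC c ((A ∪ B₁) ∪ B) := union_r hc h2 hy₀D₁ hy₀B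
      have hy₀T : y₀ ∈ rC c ((A ∪ B₁) ∪ B) := hU₂ (Or.inl hy₀D₁)
      have hx₁T : x₁ ∈ rC c ((A ∪ B₁) ∪ B) := hU₂ (Or.inl (hU₁ (Or.inr hx₁B₁)))
      have hx₀T : x₀ ∈ rC c ((A ∪ B₁) ∪ B) := hU₂ (Or.inr hx₀B)
      have hDne : ((A ∪ B₁) ∪ B).Nonempty := ⟨y₀, rC_sub hy₀T⟩
      set T : Set X := {y₀, x₁, x₀} with hTdef
      have hTsub : T ⊆ rC c ((A ∪ B₁) ∪ B) := by
        rintro z (rfl | rfl | rfl)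
        exacts [hy₀T, hx₁T, hx₀T]
      obtain ⟨ww, hwwc, hTeq⟩ := h5 hDne hTsub ⟨y₀, x₁, Or.inl rfl, Or.inr (Or.inl rfl), Ne.symm hx₁a⟩
      have hTA : T ⊆ A := by
        rintro z (rfl | rfl | rfl)
        exacts [rC_sub hy₀, hx₁M.1, hx₀M.1]
      have hy₀T' : y₀ ∈ T := Or.inl rfl
      have hcT : c T ⊆ c A := contr_c hc h1 hTA ⟨y₀, hy₀T'⟩ ((hceq ▸ hra : c A = {y₀}) ▸ rfl) hy₀T'
      -- c T ⊆ {y₀} but T \ {ww} has two distinct elements of c T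
      have hsing : ∀ z ∈ c T, z = y₀ := by
        intro z hz
        have := hcT hz
        rw [hca] at this
        exact mem_singleton_iff.1 this
      have hwwT : ww ∈ T := by rw [hTeq]; exact Or.inr rfl
      have hmem : ∀ z ∈ T, z ≠ ww → z ∈ c T := by
        intro z hzT hzww
        rw [hTeq] at hzT
        rcases hzT with h | h
        · exact h
        · exact absurd (mem_singleton_iff.1 h) hzww
      have hx₀y₀' : x₀ ≠ y₀ := hx₀y₀
      have hx₁y₀ : x₁ ≠ y₀ := hx₁a
      rcases hwwT with h | h | h
      · -- ww = y₀ : then x₁ ∈ c T, equal to y₀, contradiction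
        exact hx₁y₀ (hsing x₁ (hmem x₁ (Or.inr (Or.inl rfl)) (fun he => hx₁y₀ (he.trans h))))
      · exact hx₀y₀' (hsing x₀ (hmem x₀ (Or.inr (Or.inr rfl))
          (fun he => hx₁₀ (he.trans h).symm)))
      · rw [mem_singleton_iff] at h
        exact hx₁y₀ (hsing x₁ (hmem x₁ (Or.inr (Or.inl rfl)) (fun he => hx₁₀ (he.trans h))))
    have hy₀M : y₀ ∈ maxSet (Rr c) A := hrM hy₀
    have hMeq : maxSet (Rr c) A = {y₀, x₀} := by
      apply Subset.antisymm
      · intro z hz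
        rcases eq_or_ne z y₀ with rfl | hzy
        · exact Or.inl rfl
        · exact Or.inr (huniq z hz hzy)
      · rintro z (rfl | rfl)
        exacts [hy₀M, hx₀M]
    constructor
    · rintro ⟨b, hb⟩
      exfalso
      rw [hMeq] at hb
      have h1' : y₀ = b := by rw [← mem_singleton_iff, ← hb]; exact Or.inl rfl
      have h2' : x₀ = b := by rw [← mem_singleton_iff, ← hb]; exact Or.inr rfl
      exact hx₀y₀ (h2'.trans h1'.symm)
    · intro _
      refine ⟨x₀, ⟨hMeq ▸ Or.inr rfl, ?_⟩, ?_⟩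
      · intro w hw
        rw [hMeq] at hw
        rcases hw with rfl | rfl
        · exact Or.inr hsuc
        · exact Or.inl rfl
      · rw [hMeq, hca]
        ext z
        constructor
        · rintro rfl
          exact ⟨Or.inl rfl, fun h => hx₀y₀ (mem_singleton_iff.1 h).symm⟩
        · rintro ⟨(rfl | rfl), hz⟩
          · exact rfl
          · exact absurd rfl hz
  · -- Case 2: maxSet = rC c A
    push_neg at hex
    have hMeq : maxSet (Rr c) A = rC c A := Subset.antisymm hex hrM
    by_cases hex2 : ∃ m ∈ rC c A, m ∉ c A
    · obtain ⟨m, hm, hmc⟩ := hex2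
      have hreq : rC c A = c A ∪ {m} := by
        apply Subset.antisymm
        · intro u hu
          by_cases huc : u ∈ c A
          · exact Or.inl huc
          · exact Or.inr (mem_singleton_iff.2 (K2 hc h1 h3 h5 hu huc hm hmc))
        · rintro u (hu | hu)
          · exact hcr hu
          · exact (mem_singleton_iff.1 hu) ▸ hm
      obtain ⟨a₀, ha₀⟩ := (hc hA).1
      have ha₀m : a₀ ≠ m := fun h => hmc (h ▸ ha₀)
      constructor
      · rintro ⟨b, hb⟩
        exfalso
        rw [hMeq, hreq] at hb
        have h1' : a₀ = b := by rw [← mem_singleton_iff, ← hb]; exact Or.inl ha₀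
        have h2' : m = b := by rw [← mem_singleton_iff, ← hb]; exact Or.inr rfl
        exact ha₀m (h1'.trans h2'.symm)
      · intro _
        refine ⟨m, ⟨hMeq ▸ hm, ?_⟩, ?_⟩
        · intro w hw
          rw [hMeq, hreq] at hw
          rcases hw with hw | hw
          · exact Or.inr (dom_c hc h1 h3 (rC_sub hm) hmc hw)
          · exact Or.inl (mem_singleton_iff.1 hw)
        · rw [hMeq, hreq]
          ext z
          constructor
          · intro hz
            exact ⟨Or.inl hz, fun h => (mem_singleton_iff.1 h ▸ hmc) hz⟩
          · rintro ⟨(hz | hz), hz2⟩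
            · exact hz
            · exact absurd hz hz2
    · push_neg at hex2
      have hceq : c A = rC c A := Subset.antisymm hcr hex2
      obtain ⟨a, hca⟩ := c_singleton_of_eq_r hc h2 h3 hA hceq
      have hMa : maxSet (Rr c) A = {a} := by rw [hMeq, ← hceq, hca]
      constructor
      · intro _
        rw [hMa, hca]
      · intro hns
        exact absurd ⟨a, hMa⟩ hns

end Suff
end MCAux

/-- Theorem 1: c admits a minimal compromise representation iff
it satisfies Conditions 1–5. -/
theorem mc_characterization [Finite X] (c : Set X → Set X) (hc : ChoiceCorr c) :
    (∃ R L : X → X → Prop, MCRep c R L) ↔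
      Cond1 c ∧ Cond2 c ∧ Cond3 c ∧ Cond4 c ∧ Cond5 c := by
  constructor
  · rintro ⟨R, L, hrep⟩
    have hR := hrep.1
    have hL := hrep.2.1
    exact ⟨MCAux.cond1_of hR hL hrep, MCAux.cond2_of hR hL hrep hc, MCAux.cond3_of hR hL hrep,
      MCAux.cond4_of hR hL hrep, MCAux.cond5_of hR hL hrep⟩
  · rintro ⟨h1, h2, h3, _h4, h5⟩
    exact ⟨MCAux.Rr c, MCAux.Lr c, MCAux.weakOrd_Rr hc h1 h2 h3, MCAux.linOrd_Lr hc h1 h3,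
      fun A hA => MCAux.rep_of_conds hc h1 h2 h3 h5 hA⟩
end

section
/- If a choice correspondence c admits a minimal compromise representation with weak order R, then for every menu A, c(A) ⊆ max(A,R) and r^c(A) ⊆ max(A,R), where r^c(A) = {x ∈ A : c(A\{x}) ≠ c(A)}. -/
open Set

variable {X : Type*}

/-- under an MC representation, both c(A) and r^c(A) are
contained in max(A,R). -/
theorem c_and_rc_subset_max [Finite X] (c : Set X → Set X) (hc : ChoiceCorr c)
    (R L : X → X → Prop) (hmc : MCRep c R L) :
    ∀ ⦃A : Set X⦄, A.Nonempty → c A ⊆ maxSet R A ∧ rC c A ⊆ maxSet R A := by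
  obtain ⟨hR, hL, hrep⟩ := hmc
  have hRrefl : ∀ x, R x x := fun x => (hR.1 x x).elim id id
  -- c A ⊆ maxSet R A for every nonempty A
  have hcsub : ∀ ⦃A : Set X⦄, A.Nonempty → c A ⊆ maxSet R A := by
    intro A hA
    obtain ⟨h1, h2⟩ := hrep hA
    by_cases hs : ∃ a, maxSet R A = {a}
    · rw [h1 hs]
    · obtain ⟨m, _, hcA⟩ := h2 hs
      rw [hcA]; exact diff_subset
  intro A hA
  refine ⟨hcsub hA, ?_⟩
  intro x hx
  obtain ⟨hxA, hor⟩ := hx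
  rcases hor with ⟨a, ha⟩ | hne
  · -- singleton case: x = a and a is maximal
    subst ha
    rcases hxA with rfl
    exact ⟨rfl, fun y hy => by rcases hy with rfl; exact hRrefl _⟩
  · -- show x ∈ maxSet R A by contradiction
    by_contra hxmax
    -- there is w ∈ A with ¬ R x w
    have hw : ∃ w ∈ A, ¬ R x w := by
      by_contra h
      push_neg at h
      exact hxmax ⟨hxA, h⟩
    obtain ⟨w, hwA, hwn⟩ := hw
    have hwx : w ≠ x := fun h => hwn (h ▸ hRrefl x)
    have hA' : (A \ {x}).Nonempty := ⟨w, hwA, hwx⟩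
    -- maxSet R (A \ {x}) = maxSet R A
    have hmax : maxSet R (A \ {x}) = maxSet R A := by
      ext y
      constructor
      · rintro ⟨⟨hyA, _⟩, hy⟩
        refine ⟨hyA, fun z hz => ?_⟩
        by_cases hzx : z = x
        · subst hzx
          have hRwx : R w z := (hR.1 w z).resolve_right hwn
          exact hR.2 (hy w ⟨hwA, hwx⟩) hRwx
        · exact hy z ⟨hz, hzx⟩
      · rintro ⟨hyA, hy⟩
        have hyx : y ≠ x := by
          rintro rfl; exact hxmax ⟨hyA, hy⟩
        exact ⟨⟨hyA, hyx⟩, fun z hz => hy z hz.1⟩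
    -- conclude c (A \ {x}) = c A, contradiction
    apply hne
    obtain ⟨h1, h2⟩ := hrep hA
    obtain ⟨h1', h2'⟩ := hrep hA'
    by_cases hs : ∃ a, maxSet R A = {a}
    · rw [h1 hs, h1' (hmax ▸ hs), hmax]
    · obtain ⟨m, hm, hcA⟩ := h2 hs
      obtain ⟨m', hm', hcA'⟩ := h2' (by rw [hmax]; exact hs)
      rw [hmax] at hm'
      have : m = m' := hL.2 (hm'.2 m hm.1) (hm.2 m' hm'.1)
      rw [hcA, hcA', hmax, this]
end

section
/- The minimal compromise representation is not unique: the choice correspondence on X = {x,y,z} given by c({x,y}) = {y}, c({x,z}) = {x}, c({y,z}) = {y}, c({x,y,z}) = {y} admits two distinct MC representations: (i) R the strict order yPxPz (no indifferences) with L arbitrary, and (ii) R with x indifferent to y and both strictly above z, together with L given by zLyLx. -/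
open Set

variable {X : Type*}

/-- First representation: strict order yPxPz (x = 0, y = 1, z = 2). -/
def R1 : Fin 3 → Fin 3 → Prop :=
  fun a b => (fun v : Fin 3 => if v = 1 then 2 else if v = 0 then 1 else 0) a ≥
             (fun v : Fin 3 => if v = 1 then 2 else if v = 0 then 1 else 0) b

/-- Second representation: x indifferent to y, both strictly above z. -/
def R2 : Fin 3 → Fin 3 → Prop :=
  fun a b => (fun v : Fin 3 => if v = 2 then 0 else 1) a ≥
             (fun v : Fin 3 => if v = 2 then 0 else 1) b

/-- The linear order zLyLx. -/
def L2 : Fin 3 → Fin 3 → Prop := fun a b => b ≤ a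


instance : DecidableRel R1 := fun a b => by unfold R1; infer_instance
instance : DecidableRel R2 := fun a b => by unfold R2; infer_instance
instance : DecidableRel L2 := fun a b => by unfold L2; infer_instance

lemma fin3_cases (v : Fin 3) : v = 0 ∨ v = 1 ∨ v = 2 := by revert v; decide

lemma maxR1_of_one {A : Set (Fin 3)} (h1 : (1:Fin 3) ∈ A) : maxSet R1 A = {1} := by
  ext v
  simp only [maxSet, Set.mem_setOf_eq, Set.mem_singleton_iff]
  constructor
  · rintro ⟨hv, hmax⟩
    have h := hmax 1 h1
    rcases fin3_cases v with rfl | rfl | rfl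
    · exact absurd h (by decide)
    · rfl
    · exact absurd h (by decide)
  · rintro rfl
    refine ⟨h1, fun y _ => ?_⟩
    rcases fin3_cases y with rfl | rfl | rfl <;> decide

lemma maxR1_of_zero {A : Set (Fin 3)} (h1 : (1:Fin 3) ∉ A) (h0 : (0:Fin 3) ∈ A) :
    maxSet R1 A = {0} := by
  ext v
  simp only [maxSet, Set.mem_setOf_eq, Set.mem_singleton_iff]
  constructor
  · rintro ⟨hv, hmax⟩
    have h := hmax 0 h0
    rcases fin3_cases v with rfl | rfl | rfl
    · rfl
    · exact absurd hv h1
    · exact absurd h (by decide)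
  · rintro rfl
    refine ⟨h0, fun y hy => ?_⟩
    rcases fin3_cases y with rfl | rfl | rfl
    · decide
    · exact absurd hy h1
    · decide

lemma eq_two_set {A : Set (Fin 3)} (hA : A.Nonempty) (h1 : (1:Fin 3) ∉ A)
    (h0 : (0:Fin 3) ∉ A) : A = {2} := by
  ext v
  simp only [Set.mem_singleton_iff]
  constructor
  · intro hv
    rcases fin3_cases v with rfl | rfl | rfl
    · exact absurd hv h0
    · exact absurd hv h1
    · rfl
  · rintro rfl
    obtain ⟨w, hw⟩ := hA
    rcases fin3_cases w with rfl | rfl | rfl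
    · exact absurd hw h0
    · exact absurd hw h1
    · exact hw

lemma maxR1_two : maxSet R1 ({2} : Set (Fin 3)) = {2} := by
  ext v
  simp only [maxSet, Set.mem_setOf_eq, Set.mem_singleton_iff]
  constructor
  · rintro ⟨hv, _⟩; exact hv
  · rintro rfl
    exact ⟨rfl, fun y hy => by rw [show y = 2 from hy]; decide⟩

lemma maxR2_of_both {A : Set (Fin 3)} (h0 : (0:Fin 3) ∈ A) (h1 : (1:Fin 3) ∈ A) :
    maxSet R2 A = {0, 1} := by
  ext v
  simp only [maxSet, Set.mem_setOf_eq, Set.mem_insert_iff, Set.mem_singleton_iff]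
  constructor
  · rintro ⟨hv, hmax⟩
    have h := hmax 0 h0
    rcases fin3_cases v with rfl | rfl | rfl
    · exact Or.inl rfl
    · exact Or.inr rfl
    · exact absurd h (by decide)
  · rintro (rfl | rfl)
    · refine ⟨h0, fun y _ => ?_⟩
      rcases fin3_cases y with rfl | rfl | rfl <;> decide
    · refine ⟨h1, fun y _ => ?_⟩
      rcases fin3_cases y with rfl | rfl | rfl <;> decide

lemma maxR2_of_one {A : Set (Fin 3)} (h0 : (0:Fin 3) ∉ A) (h1 : (1:Fin 3) ∈ A) :
    maxSet R2 A = {1} := by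
  ext v
  simp only [maxSet, Set.mem_setOf_eq, Set.mem_singleton_iff]
  constructor
  · rintro ⟨hv, hmax⟩
    have h := hmax 1 h1
    rcases fin3_cases v with rfl | rfl | rfl
    · exact absurd hv h0
    · rfl
    · exact absurd h (by decide)
  · rintro rfl
    refine ⟨h1, fun y hy => ?_⟩
    rcases fin3_cases y with rfl | rfl | rfl
    · exact absurd hy h0
    · decide
    · decide

lemma maxR2_of_zero {A : Set (Fin 3)} (h0 : (0:Fin 3) ∈ A) (h1 : (1:Fin 3) ∉ A) :
    maxSet R2 A = {0} := by
  ext v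
  simp only [maxSet, Set.mem_setOf_eq, Set.mem_singleton_iff]
  constructor
  · rintro ⟨hv, hmax⟩
    have h := hmax 0 h0
    rcases fin3_cases v with rfl | rfl | rfl
    · rfl
    · exact absurd hv h1
    · exact absurd h (by decide)
  · rintro rfl
    refine ⟨h0, fun y hy => ?_⟩
    rcases fin3_cases y with rfl | rfl | rfl
    · decide
    · exact absurd hy h1
    · decide

lemma maxR2_two : maxSet R2 ({2} : Set (Fin 3)) = {2} := by
  ext v
  simp only [maxSet, Set.mem_setOf_eq, Set.mem_singleton_iff]
  constructor
  · rintro ⟨hv, _⟩; exact hv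
  · rintro rfl
    exact ⟨rfl, fun y hy => by rw [show y = 2 from hy]; decide⟩

lemma maxR1_sub (A : Set (Fin 3)) : maxSet R1 A ⊆ A := fun _ h => h.1

lemma maxR1_sing {A : Set (Fin 3)} (hA : A.Nonempty) : ∃ a, maxSet R1 A = {a} := by
  by_cases h1 : (1:Fin 3) ∈ A
  · exact ⟨1, maxR1_of_one h1⟩
  by_cases h0 : (0:Fin 3) ∈ A
  · exact ⟨0, maxR1_of_zero h1 h0⟩
  · exact ⟨2, by rw [eq_two_set hA h1 h0]; exact maxR1_two⟩

/-- non-uniqueness of the MC representation (X = Fin 3,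
x = 0, y = 1, z = 2). -/
theorem mc_representation_not_unique :
    ∃ c : Set (Fin 3) → Set (Fin 3), ChoiceCorr c ∧
      (∀ a : Fin 3, c {a} = {a}) ∧
      c {0, 1} = {1} ∧ c {0, 2} = {0} ∧ c {1, 2} = {1} ∧ c {0, 1, 2} = {1} ∧
      (∀ L : Fin 3 → Fin 3 → Prop, LinOrdRel L → MCRep c R1 L) ∧
      MCRep c R2 L2 ∧ R1 ≠ R2 := by
  refine ⟨maxSet R1, ?_, ?_, ?_, ?_, ?_, ?_, ?_, ?_, ?_⟩
  · -- ChoiceCorr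
    intro A hA
    obtain ⟨a, ha⟩ := maxR1_sing hA
    exact ⟨by rw [ha]; exact ⟨a, rfl⟩, maxR1_sub A⟩
  · -- singletons
    intro a
    ext v
    simp only [maxSet, Set.mem_setOf_eq, Set.mem_singleton_iff]
    constructor
    · rintro ⟨hv, _⟩; exact hv
    · rintro rfl
      refine ⟨rfl, fun y hy => ?_⟩
      rw [show y = v from hy]
      exact le_refl _
  · exact maxR1_of_one (by simp)
  · exact maxR1_of_zero (by simp) (by simp)
  · exact maxR1_of_one (by simp)
  · exact maxR1_of_one (by simp)
  · -- MCRep with R1 and any linear L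
    intro L hL
    refine ⟨⟨by decide, by decide⟩, hL, fun A hA => ⟨fun _ => rfl, fun hns => ?_⟩⟩
    exact absurd (maxR1_sing hA) hns
  · -- MCRep with R2 and L2
    refine ⟨⟨by decide, by decide⟩, ⟨⟨by decide, by decide⟩, by decide⟩, fun A hA => ?_⟩
    by_cases h1 : (1:Fin 3) ∈ A <;> by_cases h0 : (0:Fin 3) ∈ A
    · -- both: maxSet R2 A = {0,1}, not a singleton
      constructor
      · rintro ⟨a, ha⟩
        rw [maxR2_of_both h0 h1] at ha
        have e0 : (0:Fin 3) = a := by rw [← Set.mem_singleton_iff, ← ha]; exact Or.inl rfl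
        have e1 : (1:Fin 3) = a := by rw [← Set.mem_singleton_iff, ← ha]; exact Or.inr rfl
        exact absurd (e0.trans e1.symm) (by decide)
      · intro _
        refine ⟨0, ⟨?_, ?_⟩, ?_⟩
        · rw [maxR2_of_both h0 h1]; exact Or.inl rfl
        · intro y hy
          rw [maxR2_of_both h0 h1] at hy
          rcases hy with rfl | rfl <;> decide
        · rw [maxR2_of_both h0 h1, maxR1_of_one h1]
          ext v
          fin_cases v <;> simp
    · -- only 1
      rw [maxR1_of_one h1]
      constructor
      · intro _; rw [maxR2_of_one h0 h1]
      · intro hns; exact absurd ⟨1, maxR2_of_one h0 h1⟩ hns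
    · -- only 0
      rw [maxR1_of_zero h1 h0]
      constructor
      · intro _; rw [maxR2_of_zero h0 h1]
      · intro hns; exact absurd ⟨0, maxR2_of_zero h0 h1⟩ hns
    · -- neither: A = {2}
      rw [eq_two_set hA h1 h0, maxR1_two]
      constructor
      · intro _; rw [maxR2_two]
      · intro hns; exact absurd ⟨2, maxR2_two⟩ hns
  · -- R1 ≠ R2
    intro h
    have : R1 0 1 ↔ R2 0 1 := by rw [h]
    revert this; decide
end

section
/- If a choice correspondence c admits a minimal compromise representation with weak order R and linear order L, and in some menu A the set max(A,R) contains at least two elements, then c(A) = max(A,R) \ {m} where m = min(max(A,R), L), and moreover m ∈ r^c(A) whenever |max(A,R)| ≥ 3, i.e., removing the vetoed alternative changes the choice set when at least three alternatives are shortlisted. -/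
open Set

variable {X : Type*}

/-- when the shortlist is not a singleton, c(A) is the shortlist
minus its L-minimum m; and m ∈ r^c(A) whenever the shortlist has ≥ 3 elements. -/
theorem vetoed_alternative_in_rc [Finite X] (c : Set X → Set X) (hc : ChoiceCorr c)
    (R L : X → X → Prop) (hmc : MCRep c R L) :
    ∀ ⦃A : Set X⦄, A.Nonempty →
      (∃ a b, a ∈ maxSet R A ∧ b ∈ maxSet R A ∧ a ≠ b) →
      ∀ ⦃m : X⦄, IsMinOf L (maxSet R A) m →
        c A = maxSet R A \ {m} ∧
        ((∃ a b d, a ∈ maxSet R A ∧ b ∈ maxSet R A ∧ d ∈ maxSet R A ∧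
            a ≠ b ∧ a ≠ d ∧ b ≠ d) → m ∈ rC c A) := by

  obtain ⟨hR, hL, hrep⟩ := hmc
  intro A hA hab m hm
  obtain ⟨a, b, ha, hb, hne⟩ := hab
  have hns : ¬ ∃ x, maxSet R A = {x} := by
    rintro ⟨x, hx⟩
    rw [hx] at ha hb
    exact hne (ha.trans hb.symm)
  obtain ⟨m', hm', hcA⟩ := (hrep hA).2 hns
  have hmm : m = m' := hL.2 (hm'.2 m hm.1) (hm.2 m' hm'.1)
  subst hmm
  refine ⟨hcA, ?_⟩
  rintro ⟨a0, b0, d0, ha0, hb0, hd0, h1, h2, h3⟩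
  have hx0 : ∃ x, x ∈ maxSet R A ∧ x ≠ m := by
    by_cases h : a = m
    · exact ⟨b, hb, fun e => hne (h.trans e.symm)⟩
    · exact ⟨a, ha, h⟩
  obtain ⟨x0, hx0, hx0m⟩ := hx0
  have hmax : maxSet R (A \ {m}) = maxSet R A \ {m} := by
    ext x
    constructor
    · rintro ⟨hxA, hx⟩
      have hRxm : R x m := hR.2 (hx x0 ⟨hx0.1, hx0m⟩) (hx0.2 m hm.1.1)
      refine ⟨⟨hxA.1, fun y hy => ?_⟩, hxA.2⟩
      by_cases hy' : y = m
      · rw [hy']; exact hRxm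
      · exact hx y ⟨hy, hy'⟩
    · rintro ⟨⟨hxA, hx⟩, hxm⟩
      exact ⟨⟨hxA, hxm⟩, fun y hy => hx y hy.1⟩
  have hA' : (A \ {m}).Nonempty := ⟨x0, hx0.1, hx0m⟩
  have huv : ∃ u v, u ∈ maxSet R A ∧ v ∈ maxSet R A ∧ u ≠ v ∧ u ≠ m ∧ v ≠ m := by
    by_cases h1' : a0 = m
    · exact ⟨b0, d0, hb0, hd0, h3, fun e => h1 (h1'.trans e.symm),
        fun e => h2 (h1'.trans e.symm)⟩
    · by_cases h2' : b0 = m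
      · exact ⟨a0, d0, ha0, hd0, h2, h1', fun e => h3 (h2'.trans e.symm)⟩
      · exact ⟨a0, b0, ha0, hb0, h1, h1', h2'⟩
  obtain ⟨u, v, hu, hv, huvne, hum, hvm⟩ := huv
  have hns' : ¬ ∃ x, maxSet R (A \ {m}) = {x} := by
    rw [hmax]
    rintro ⟨x, hx⟩
    have h1 : u ∈ ({x} : Set X) := hx ▸ (⟨hu, hum⟩ : u ∈ maxSet R A \ {m})
    have h2 : v ∈ ({x} : Set X) := hx ▸ (⟨hv, hvm⟩ : v ∈ maxSet R A \ {m})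
    exact huvne (h1.trans h2.symm)
  obtain ⟨m2, hm2, hc'⟩ := (hrep hA').2 hns'
  have hm2mem : m2 ∈ maxSet R (A \ {m}) := hm2.1
  rw [hmax] at hm2mem
  refine ⟨hm.1.1, Or.inr fun h => ?_⟩
  have hmem : m2 ∈ c A := by rw [hcA]; exact hm2mem
  rw [← h, hc'] at hmem
  exact hmem.2 rfl
end
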